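/- arXiv:2405.05276 — 5 statements merged into one kernel-verified Lean document; each statement's English description precedes it below -/
import Mathlib

section
/- For a metric space (B,d), a function f : B → ℝ is the radial limit of some continuous function f̄ : B × ℝ_{>0} → ℝ (i.e. f(b) = lim_{t→0⁺} f̄(b,t) for every b ∈ B) if and only if f is a pointwise limit of a sequence of continuous functions B → ℝ. -/
open Filter Topology Set

/-- Linear interpolation piece on `[n, n+1]`. -/
noncomputable def itpH {B : Type*} (g : ℕ → B → ℝ) (n : ℕ) : B × ℝ → ℝ :=
  fun p => (1 - (p.2 - n)) * g n p.1 + (p.2 - n) * g (n + 1) p.1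

/-- Global interpolation of the sequence `g` along the second coordinate. -/
noncomputable def itp {B : Type*} (g : ℕ → B → ℝ) : B × ℝ → ℝ :=
  fun p => (1 - Int.fract p.2) * g ⌊p.2⌋₊ p.1 + Int.fract p.2 * g (⌊p.2⌋₊ + 1) p.1

lemma itpH_continuous {B : Type*} [TopologicalSpace B] (g : ℕ → B → ℝ)
    (hg : ∀ n, Continuous (g n)) (n : ℕ) : Continuous (itpH g n) := by
  unfold itpH
  exact ((continuous_const.sub (continuous_snd.sub continuous_const)).mul
    ((hg n).comp continuous_fst)).add
    ((continuous_snd.sub continuous_const).mul ((hg (n + 1)).comp continuous_fst))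

lemma itp_eq {B : Type*} (g : ℕ → B → ℝ) {n : ℕ} {p : B × ℝ}
    (h1 : (n : ℝ) ≤ p.2) (h2 : p.2 < n + 1) : itp g p = itpH g n p := by
  have hs0 : (0 : ℝ) ≤ p.2 := le_trans (by positivity) h1
  have hf : ⌊p.2⌋₊ = n := (Nat.floor_eq_iff hs0).mpr ⟨h1, h2⟩
  have hfr : Int.fract p.2 = p.2 - n :=
    Int.fract_eq_iff.mpr ⟨by linarith, by linarith, ⟨n, by push_cast; ring⟩⟩
  simp [itp, itpH, hf, hfr]

lemma itp_continuousOn {B : Type*} [TopologicalSpace B] (g : ℕ → B → ℝ)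
    (hg : ∀ n, Continuous (g n)) :
    ContinuousOn (itp g) (Set.univ ×ˢ Set.Ioi (0 : ℝ)) := by
  rintro ⟨b, s⟩ hmem
  have hs : 0 < s := hmem.2
  apply ContinuousAt.continuousWithinAt
  by_cases hfr : Int.fract s = 0
  · obtain ⟨-, -, z, hz⟩ := Int.fract_eq_iff.mp hfr
    rw [sub_zero] at hz
    have hz0 : (0 : ℤ) < z := by exact_mod_cast hz ▸ hs
    set n := z.toNat with hndef
    have hzn : (n : ℤ) = z := Int.toNat_of_nonneg hz0.le
    have hn : (n : ℝ) = s := by rw [hz]; exact_mod_cast hzn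
    obtain ⟨m, hm⟩ : ∃ m, n = m + 1 := ⟨n - 1, by omega⟩
    set K : B × ℝ → ℝ := fun p => if p.2 ≤ (n : ℝ) then itpH g m p else itpH g n p with hK
    have hbdry : ∀ p : B × ℝ, p.2 = (n : ℝ) → itpH g m p = itpH g n p := by
      intro p hp
      simp only [itpH, hp, hm]
      push_cast
      ring
    have hKc : Continuous K :=
      Continuous.if_le (itpH_continuous g hg m) (itpH_continuous g hg n)
        continuous_snd continuous_const hbdry
    have hopen : (Set.univ ×ˢ Set.Ioo ((m : ℝ)) ((n : ℝ) + 1)) ∈ 𝓝 ((b, s) : B × ℝ) := by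
      apply (isOpen_univ.prod isOpen_Ioo).mem_nhds
      refine ⟨trivial, ?_, ?_⟩
      · rw [← hn, hm]; push_cast; linarith
      · rw [← hn]; linarith
    have hev : K =ᶠ[𝓝 ((b, s) : B × ℝ)] itp g := by
      filter_upwards [hopen] with p hp
      obtain ⟨-, hp1, hp2⟩ := hp
      by_cases hle : p.2 ≤ (n : ℝ)
      · rcases eq_or_lt_of_le hle with heq | hlt
        · have e1 : itp g p = itpH g n p := itp_eq g heq.ge (by linarith)
          rw [hK]; simp only [if_pos hle, e1]
          exact hbdry p heq
        · have e1 : itp g p = itpH g m p := by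
            refine itp_eq g hp1.le ?_
            rw [hm] at hlt; push_cast at hlt ⊢; linarith
          rw [hK]; simp only [if_pos hle, e1]
      · push_neg at hle
        have e1 : itp g p = itpH g n p := itp_eq g hle.le hp2
        rw [hK]; simp only [if_neg (not_le.mpr hle), e1]
    exact hKc.continuousAt.congr hev
  · set n := ⌊s⌋₊ with hndef
    have h1 : (n : ℝ) ≤ s := Nat.floor_le hs.le
    have h1' : (n : ℝ) < s := by
      rcases eq_or_lt_of_le h1 with heq | hlt
      · exact absurd (by rw [← heq]; exact_mod_cast Int.fract_natCast n) hfr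
      · exact hlt
    have h2 : s < n + 1 := Nat.lt_floor_add_one s
    have hopen : (Set.univ ×ˢ Set.Ioo ((n : ℝ)) ((n : ℝ) + 1)) ∈ 𝓝 ((b, s) : B × ℝ) :=
      (isOpen_univ.prod isOpen_Ioo).mem_nhds ⟨trivial, h1', h2⟩
    have hev : itpH g n =ᶠ[𝓝 ((b, s) : B × ℝ)] itp g := by
      filter_upwards [hopen] with p hp
      exact (itp_eq g hp.2.1.le hp.2.2).symm
    exact (itpH_continuous g hg n).continuousAt.congr hev

lemma itp_tendsto {B : Type*} (g : ℕ → B → ℝ) (b : B) (y : ℝ)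
    (hg : Tendsto (fun n => g n b) atTop (nhds y)) :
    Tendsto (fun s : ℝ => itp g (b, s)) atTop (nhds y) := by
  have hfl : Tendsto (fun s : ℝ => ⌊s⌋₊) atTop atTop := tendsto_nat_floor_atTop
  have h1 : Tendsto (fun s : ℝ => g ⌊s⌋₊ b) atTop (nhds y) := hg.comp hfl
  have h2 : Tendsto (fun s : ℝ => g (⌊s⌋₊ + 1) b) atTop (nhds y) :=
    hg.comp (tendsto_atTop_mono (fun s => Nat.le_succ _) hfl)
  have key : Tendsto (fun s : ℝ => itp g (b, s) - y) atTop (nhds 0) := by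
    apply squeeze_zero_norm (a := fun s : ℝ => ‖g ⌊s⌋₊ b - y‖ + ‖g (⌊s⌋₊ + 1) b - y‖)
    · intro s
      have e : itp g (b, s) - y =
          (1 - Int.fract s) * (g ⌊s⌋₊ b - y) + Int.fract s * (g (⌊s⌋₊ + 1) b - y) := by
        simp only [itp]
        ring
      rw [e]
      have hf0 := Int.fract_nonneg s
      have hf1 := (Int.fract_lt_one s).le
      calc ‖(1 - Int.fract s) * (g ⌊s⌋₊ b - y) + Int.fract s * (g (⌊s⌋₊ + 1) b - y)‖
          ≤ ‖(1 - Int.fract s) * (g ⌊s⌋₊ b - y)‖ + ‖Int.fract s * (g (⌊s⌋₊ + 1) b - y)‖ :=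
            norm_add_le _ _
        _ = |1 - Int.fract s| * ‖g ⌊s⌋₊ b - y‖ + |Int.fract s| * ‖g (⌊s⌋₊ + 1) b - y‖ := by
            simp [Real.norm_eq_abs, abs_mul]
        _ ≤ 1 * ‖g ⌊s⌋₊ b - y‖ + 1 * ‖g (⌊s⌋₊ + 1) b - y‖ := by
            gcongr
            · rw [abs_of_nonneg (by linarith)]; linarith
            · rw [abs_of_nonneg hf0]; linarith
        _ = ‖g ⌊s⌋₊ b - y‖ + ‖g (⌊s⌋₊ + 1) b - y‖ := by ring
    · have z1 : Tendsto (fun s : ℝ => ‖g ⌊s⌋₊ b - y‖) atTop (nhds 0) := by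
        have : Tendsto (fun s : ℝ => g ⌊s⌋₊ b - y) atTop (nhds (y - y)) :=
          h1.sub tendsto_const_nhds
        rw [sub_self] at this
        simpa using this.norm
      have z2 : Tendsto (fun s : ℝ => ‖g (⌊s⌋₊ + 1) b - y‖) atTop (nhds 0) := by
        have : Tendsto (fun s : ℝ => g (⌊s⌋₊ + 1) b - y) atTop (nhds (y - y)) :=
          h2.sub tendsto_const_nhds
        rw [sub_self] at this
        simpa using this.norm
      simpa using z1.add z2
  have := key.add (tendsto_const_nhds (x := y))
  simpa using this

/-- For a metric space `B`, a function `f : B → ℝ` is the radial limit of some continuous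
function on `B × ℝ_{>0}` iff it is a pointwise limit of a sequence of continuous functions. -/
theorem radial_limit_iff_pointwise_limit_of_continuous
    {B : Type*} [MetricSpace B] (f : B → ℝ) :
    (∃ fbar : B × ℝ → ℝ, ContinuousOn fbar (Set.univ ×ˢ Set.Ioi (0 : ℝ)) ∧
      ∀ b : B, Tendsto (fun t => fbar (b, t)) (nhdsWithin 0 (Set.Ioi (0 : ℝ))) (nhds (f b))) ↔
    (∃ g : ℕ → B → ℝ, (∀ n, Continuous (g n)) ∧
      ∀ b : B, Tendsto (fun n => g n b) atTop (nhds (f b))) := by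
  constructor
  · rintro ⟨fbar, hcont, hlim⟩
    refine ⟨fun n b => fbar (b, ((n : ℝ) + 1)⁻¹), fun n => ?_, fun b => ?_⟩
    · have hpos : (0 : ℝ) < ((n : ℝ) + 1)⁻¹ := by positivity
      have hopen : IsOpen ((Set.univ : Set B) ×ˢ Set.Ioi (0 : ℝ)) :=
        IsOpen.prod isOpen_univ isOpen_Ioi
      rw [continuous_iff_continuousAt]
      intro b
      have h1 : ContinuousAt fbar (b, ((n : ℝ) + 1)⁻¹) :=
        hcont.continuousAt (hopen.mem_nhds ⟨trivial, hpos⟩)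
      have h2 : Continuous (fun x : B => (x, ((n : ℝ) + 1)⁻¹)) :=
        continuous_id.prodMk continuous_const
      exact ContinuousAt.comp (f := fun x : B => (x, ((n : ℝ) + 1)⁻¹)) h1 h2.continuousAt
    · have ht : Tendsto (fun n : ℕ => ((n : ℝ) + 1)⁻¹) atTop (nhdsWithin 0 (Set.Ioi 0)) := by
        rw [tendsto_nhdsWithin_iff]
        constructor
        · have hat : Tendsto (fun n : ℕ => (n : ℝ) + 1) atTop atTop :=
            tendsto_atTop_add_const_right atTop 1 tendsto_natCast_atTop_atTop
          exact hat.inv_tendsto_atTop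
        · filter_upwards with n
          simp only [Set.mem_Ioi]
          positivity
      exact (hlim b).comp ht
  · rintro ⟨g, hgc, hgl⟩
    refine ⟨fun p => itp g (p.1, p.2⁻¹), ?_, fun b => ?_⟩
    · refine (itp_continuousOn g hgc).comp ?_ ?_
      · exact continuousOn_fst.prodMk
          (continuous_snd.continuousOn.inv₀ (fun p hp => ne_of_gt hp.2))
      · rintro ⟨b, t⟩ ⟨-, ht⟩
        exact ⟨trivial, (inv_pos.mpr ht : (0 : ℝ) < t⁻¹)⟩
    · exact (itp_tendsto g b (f b) (hgl b)).comp tendsto_inv_nhdsGT_zero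
end

section
/- Let (B,d) be a metric space, φ a gauge (continuous, φ(0)=0, nonnegative), and (f_n) a sequence of continuous functions B → ℝ that φ'-converges to f : B → ℝ for some gauge φ' satisfying min over [1/(n+1), 1/n] of φ' > max over [1/(n+1), 1/n] of φ for all sufficiently large n. Then the piecewise-linear interpolation f̄ : B × ℝ_{>0} → ℝ given by f̄(b, s/(n+1) + (1−s)/n) = s·f_{n+1}(b) + (1−s)·f_n(b) for s ∈ [0,1] is continuous and has φ-boundary-limit f, i.e. for every b ∈ B, f̄(b',t) → f(b) as (b',t) → (b,0) subject to d(b,b') ≤ φ(t). -/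
open Filter Topology Set

/-- If `(f n)` φ'-converges to `f` for a gauge `φ'` dominating the gauge `φ` in the sense
that `min_{I_n} φ' > max_{I_n} φ` for large `n` (`I_n = [1/(n+1), 1/n]`), then the
piecewise-linear interpolation `f̄(b, s/(n+1)+(1-s)/n) = s f_{n+1}(b) + (1-s) f_n(b)`
is continuous on `B × (0,1]` and has φ-boundary-limit `f`. -/
theorem interpolation_continuous_and_phi_boundary_limit
    {B : Type*} [MetricSpace B] (f : B → ℝ) (fseq : ℕ → B → ℝ)
    (φ φ' : ℝ → ℝ) (ε ε' : ℝ) (hε : 0 < ε) (hε' : 0 < ε')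
    (hφcont : ContinuousOn φ (Set.Ico 0 ε)) (hφ0 : φ 0 = 0)
    (hφnn : ∀ x ∈ Set.Ico 0 ε, 0 ≤ φ x)
    (hφ'cont : ContinuousOn φ' (Set.Ico 0 ε')) (hφ'0 : φ' 0 = 0)
    (hφ'nn : ∀ x ∈ Set.Ico 0 ε', 0 ≤ φ' x)
    (hcont : ∀ n, Continuous (fseq n))
    (hminmax : ∃ N : ℕ, ∀ n : ℕ, N ≤ n →
      ∀ t ∈ Set.Icc (1 / ((n : ℝ) + 1)) (1 / (n : ℝ)),
      ∀ t' ∈ Set.Icc (1 / ((n : ℝ) + 1)) (1 / (n : ℝ)), φ t < φ' t')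
    (hφ'conv : ∀ b : B, ∀ η : ℝ, 0 < η → ∃ N : ℕ, ∀ n : ℕ, N ≤ n →
      ∀ b' : B, dist b b' ≤ φ' (1 / n) → |fseq n b' - f b| < η)
    (fbar : B × ℝ → ℝ)
    (hinterp : ∀ b : B, ∀ n : ℕ, 1 ≤ n → ∀ s ∈ Set.Icc (0 : ℝ) 1,
      fbar (b, s / ((n : ℝ) + 1) + (1 - s) / (n : ℝ)) =
        s * fseq (n + 1) b + (1 - s) * fseq n b) :
    ContinuousOn fbar (Set.univ ×ˢ Set.Ioc (0 : ℝ) 1) ∧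
    ∀ b : B, ∀ η : ℝ, 0 < η → ∃ δ : ℝ, 0 < δ ∧ ∀ (b' : B) (t : ℝ),
      0 < t → t < δ → dist b b' ≤ φ t → |fbar (b', t) - f b| < η := by
  -- the explicit formula on each strip
  have key : ∀ n : ℕ, 1 ≤ n → ∀ (b : B) (t : ℝ), 1/((n:ℝ)+1) ≤ t → t ≤ 1/(n:ℝ) →
      fbar (b, t) = (((n:ℝ)+1) - n*((n:ℝ)+1)*t) * fseq (n+1) b
        + ((n:ℝ)*((n:ℝ)+1)*t - n) * fseq n b := by
    intro n hn b t h1 h2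
    have hn0 : (0:ℝ) < n := by exact_mod_cast hn
    have hnt : (n:ℝ) * t ≤ 1 := by
      have := (le_div_iff₀ hn0).mp h2; linarith
    have hnt1 : 1 ≤ ((n:ℝ)+1) * t := by
      have := (div_le_iff₀ (by positivity : (0:ℝ) < (n:ℝ)+1)).mp h1; linarith
    set s : ℝ := ((n:ℝ)+1) * (1 - n*t) with hs
    have hs0 : 0 ≤ s := mul_nonneg (by positivity) (by linarith)
    have hs1 : s ≤ 1 := by nlinarith
    have heq : s / ((n:ℝ)+1) + (1 - s)/(n:ℝ) = t := by
      field_simp [hs]; ring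
    have h := hinterp b n hn s ⟨hs0, hs1⟩
    rw [heq] at h
    rw [h, hs]; ring
  -- strip membership from floor
  have floor_mem : ∀ t : ℝ, 0 < t → t ≤ 1 → 1 ≤ ⌊1/t⌋₊ ∧
      1/((⌊1/t⌋₊ : ℝ)+1) < t ∧ t ≤ 1/(⌊1/t⌋₊ : ℝ) := by
    intro t ht ht1
    have h1t : (1:ℝ) ≤ 1/t := by rw [le_div_iff₀ ht]; linarith
    have hfl : (1:ℕ) ≤ ⌊1/t⌋₊ := Nat.le_floor (by exact_mod_cast h1t)
    have hfl0 : (0:ℝ) < (⌊1/t⌋₊ : ℝ) := by exact_mod_cast hfl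
    refine ⟨hfl, ?_, ?_⟩
    · have h2 : 1/t < (⌊1/t⌋₊:ℝ) + 1 := Nat.lt_floor_add_one (1/t)
      rw [div_lt_iff₀ ht] at h2
      rw [div_lt_iff₀ (by positivity : (0:ℝ) < (⌊1/t⌋₊:ℝ)+1)]
      nlinarith
    · rw [le_div_iff₀ hfl0]
      have := Nat.floor_le (by positivity : (0:ℝ) ≤ 1/t)
      calc t * (⌊1/t⌋₊:ℝ) ≤ t * (1/t) := by nlinarith
        _ = 1 := by field_simp
  set S : ℕ → Set (B × ℝ) := fun m => univ ×ˢ Icc (1/((m:ℝ)+1)) (1/(m:ℝ)) with hS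
  constructor
  · -- continuity
    have hg : ∀ n : ℕ, Continuous (fun p : B × ℝ =>
        (((n:ℝ)+1) - n*((n:ℝ)+1)*p.2) * fseq (n+1) p.1
          + ((n:ℝ)*((n:ℝ)+1)*p.2 - n) * fseq n p.1) := by
      intro n
      exact ((continuous_const.sub (continuous_const.mul continuous_snd)).mul
        ((hcont (n+1)).comp continuous_fst)).add
        (((continuous_const.mul continuous_snd).sub continuous_const).mul
        ((hcont n).comp continuous_fst))
    -- within-strip continuity at every point
    have hcwa : ∀ n : ℕ, ∀ p : B × ℝ, ContinuousWithinAt fbar (S n) p := by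
      intro n p
      rcases Nat.eq_zero_or_pos n with hn | hn
      · subst hn
        have he : S 0 = (∅ : Set (B × ℝ)) := by
          rw [hS]
          simp only [Nat.cast_zero]
          rw [show Icc (1/((0:ℝ)+1)) (1/(0:ℝ)) = (∅ : Set ℝ) by
            apply Icc_eq_empty; norm_num]
          simp
        rw [he]
        simp [ContinuousWithinAt, nhdsWithin]
      · by_cases hp : p ∈ S n
        · have hco : ContinuousOn fbar (S n) := by
            apply (hg n).continuousOn.congr
            rintro ⟨b, t⟩ ⟨-, ht1, ht2⟩
            exact key n hn b t ht1 ht2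
          exact hco p hp
        · apply continuousWithinAt_of_notMem_closure
          rwa [IsClosed.closure_eq (isClosed_univ.prod isClosed_Icc)]
    rintro ⟨b, t⟩ hp
    rw [mem_prod] at hp
    obtain ⟨-, ht, ht1⟩ := hp
    obtain ⟨hn1, htl, htr⟩ := floor_mem t ht ht1
    set n : ℕ := ⌊1/t⌋₊ with hn
    set r : ℝ := if n = 1 then 2 else 1/((n:ℝ)-1) with hr
    have hn0 : (0:ℝ) < n := by exact_mod_cast hn1
    have htlt : t < r := by
      rcases eq_or_lt_of_le hn1 with h1 | h1
      · rw [hr, if_pos h1.symm]; linarith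
      · rw [hr, if_neg (by omega)]
        have h2 : (2:ℝ) ≤ n := by exact_mod_cast h1
        calc t ≤ 1/(n:ℝ) := htr
          _ < 1/((n:ℝ)-1) := by
            apply one_div_lt_one_div_of_lt (by linarith) (by linarith)
    have hu : (univ ×ˢ Ioo (1/((n:ℝ)+2)) r : Set (B × ℝ)) ∈ 𝓝 ((b, t) : B × ℝ) := by
      apply (isOpen_univ.prod isOpen_Ioo).mem_nhds
      refine ⟨mem_univ _, ?_, htlt⟩
      calc 1/((n:ℝ)+2) < 1/((n:ℝ)+1) := by
            apply one_div_lt_one_div_of_lt (by positivity); linarith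
        _ < t := htl
    rw [← continuousWithinAt_inter hu]
    have hsub : (univ ×ˢ Ioc (0:ℝ) 1) ∩ (univ ×ˢ Ioo (1/((n:ℝ)+2)) r) ⊆
        S (n+1) ∪ (S n ∪ S (n-1)) := by
      rintro ⟨b', t'⟩ ⟨hp1, hp2⟩
      rw [mem_prod] at hp1 hp2
      obtain ⟨-, ht'0, ht'1⟩ := hp1
      obtain ⟨-, ht'l, ht'r⟩ := hp2
      by_cases hc1 : t' ≤ 1/((n:ℝ)+1)
      · left
        refine ⟨mem_univ _, ?_, ?_⟩ <;> push_cast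
        · rw [show (n:ℝ)+1+1 = (n:ℝ)+2 by ring]; linarith
        · exact hc1
      · push_neg at hc1
        by_cases hc2 : t' ≤ 1/(n:ℝ)
        · right; left
          exact ⟨mem_univ _, hc1.le, hc2⟩
        · push_neg at hc2
          right; right
          rcases eq_or_lt_of_le hn1 with h1 | h1
          · exfalso
            rw [← h1] at hc2
            norm_num at hc2
            linarith
          · have h2 : (2:ℕ) ≤ n := h1
            have hcast : ((n-1:ℕ):ℝ) = (n:ℝ) - 1 := by
              push_cast [Nat.cast_sub (by omega : 1 ≤ n)]; ring
            refine ⟨mem_univ _, ?_, ?_⟩ <;> rw [hcast]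
            · rw [show (n:ℝ) - 1 + 1 = (n:ℝ) by ring]
              exact hc2.le
            · rw [hr, if_neg (by omega)] at ht'r
              exact ht'r.le
    exact (((hcwa (n+1) _).union ((hcwa n _).union (hcwa (n-1) _)))).mono hsub
  · -- boundary limit
    intro b η hη
    obtain ⟨N0, hN0⟩ := hminmax
    obtain ⟨N1, hN1⟩ := hφ'conv b (η/2) (by positivity)
    set M : ℕ := max 1 (max N0 N1) with hM
    have hM1 : 1 ≤ M := le_max_left _ _
    have hM0 : (0:ℝ) < M := by exact_mod_cast hM1
    refine ⟨1/M, by positivity, ?_⟩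
    intro b' t ht htδ hdist
    have ht1 : t ≤ 1 := by
      have h : 1/(M:ℝ) ≤ 1 := by
        rw [div_le_one hM0]; exact_mod_cast hM1
      linarith
    obtain ⟨hn1, htl, htr⟩ := floor_mem t ht ht1
    set n : ℕ := ⌊1/t⌋₊ with hn
    have hMn : M ≤ n := by
      apply Nat.le_floor
      rw [le_div_iff₀ ht]
      have h1 : (M:ℝ) * t < 1 := by
        calc (M:ℝ)*t < (M:ℝ)*(1/M) := by
              exact mul_lt_mul_of_pos_left htδ hM0
          _ = 1 := by field_simp
      linarith [mul_comm (M:ℝ) t]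
    have hn0 : (0:ℝ) < n := by exact_mod_cast hn1
    have htmem : t ∈ Icc (1/((n:ℝ)+1)) (1/(n:ℝ)) := ⟨htl.le, htr⟩
    have hend1 : (1/(n:ℝ)) ∈ Icc (1/((n:ℝ)+1)) (1/(n:ℝ)) :=
      ⟨one_div_le_one_div_of_le hn0 (by linarith), le_refl _⟩
    have hend2 : (1/((n:ℝ)+1)) ∈ Icc (1/((n:ℝ)+1)) (1/(n:ℝ)) :=
      ⟨le_refl _, one_div_le_one_div_of_le hn0 (by linarith)⟩
    have hNn : N0 ≤ n := le_trans (le_trans (le_max_left _ _) (le_max_right 1 _)) hMn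
    have hφ1 : φ t < φ' (1/(n:ℝ)) := hN0 n hNn t htmem _ hend1
    have hφ2 : φ t < φ' (1/((n:ℝ)+1)) := hN0 n hNn t htmem _ hend2
    have hN1n : N1 ≤ M := le_trans (le_max_right _ _) (le_max_right 1 _)
    have hA : |fseq (n+1) b' - f b| < η/2 := by
      apply hN1 (n+1) (by omega) b'
      push_cast
      exact hdist.trans hφ2.le
    have hB : |fseq n b' - f b| < η/2 := by
      apply hN1 n (by omega) b'
      exact hdist.trans hφ1.le
    rw [key n hn1 b' t htl.le htr]
    set c1 : ℝ := ((n:ℝ)+1) - n*((n:ℝ)+1)*t with hc1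
    set c2 : ℝ := (n:ℝ)*((n:ℝ)+1)*t - n with hc2
    have hnt : (n:ℝ) * t ≤ 1 := by
      have := (le_div_iff₀ hn0).mp htr; linarith
    have hnt1 : 1 ≤ ((n:ℝ)+1) * t := by
      have := (div_le_iff₀ (by positivity : (0:ℝ) < (n:ℝ)+1)).mp htl.le; linarith
    have hc1nn : 0 ≤ c1 := by rw [hc1]; nlinarith
    have hc2nn : 0 ≤ c2 := by rw [hc2]; nlinarith
    have hsum : c1 + c2 = 1 := by rw [hc1, hc2]; ring
    clear_value c1 c2
    have hfb : c1 * f b + c2 * f b = f b := by rw [← add_mul, hsum, one_mul]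
    have hre : c1 * fseq (n+1) b' + c2 * fseq n b' - f b =
        c1 * (fseq (n+1) b' - f b) + c2 * (fseq n b' - f b) := by
      rw [mul_sub, mul_sub]; linarith
    rw [hre]
    have e1 : c1 * |fseq (n+1) b' - f b| ≤ c1 * (η/2) :=
      mul_le_mul_of_nonneg_left hA.le hc1nn
    have e2 : c2 * |fseq n b' - f b| ≤ c2 * (η/2) :=
      mul_le_mul_of_nonneg_left hB.le hc2nn
    have hhalf : c1 * (η/2) + c2 * (η/2) = η/2 := by rw [← add_mul, hsum, one_mul]
    calc |c1 * (fseq (n+1) b' - f b) + c2 * (fseq n b' - f b)|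
        ≤ |c1 * (fseq (n+1) b' - f b)| + |c2 * (fseq n b' - f b)| := abs_add_le _ _
      _ = c1 * |fseq (n+1) b' - f b| + c2 * |fseq n b' - f b| := by
          rw [abs_mul, abs_mul, abs_of_nonneg hc1nn, abs_of_nonneg hc2nn]
      _ < η := by linarith [e1, e2, hhalf, hη]
end

section
/- Let B be a subset of a metric space (B',d), given the induced metric. A function f : B → ℝ is a pointwise limit of continuous functions B → ℝ if and only if f is a pointwise limit of restrictions to B of continuous functions defined on all of B'. -/
open Filter Topology Set Metric

section Auxiliary

open Metric

variable {X : Type*} [MetricSpace X]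

/-- countable increasing union of closed sets -/
def SigC (E : Set X) : Prop :=
  ∃ W : ℕ → Set X, Monotone W ∧ (∀ n, IsClosed (W n)) ∧ (⋃ n, W n) = E

lemma SigC_closed {E : Set X} (hE : IsClosed E) : SigC E :=
  ⟨fun _ => E, monotone_const, fun _ => hE, iUnion_const E⟩

lemma SigC_compl_closed {T : Set X} (hT : IsClosed T) : SigC Tᶜ := by
  rcases eq_empty_or_nonempty T with h | h
  · rw [h, compl_empty]; exact SigC_closed isClosed_univ
  · refine ⟨fun m => {x | 1/(m+1 : ℝ) ≤ infDist x T}, ?_, ?_, ?_⟩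
    · intro m m' hmm x hx
      have h1 : (m:ℝ) + 1 ≤ (m':ℝ) + 1 := by exact_mod_cast Nat.succ_le_succ hmm
      have h2 : 1/(m'+1:ℝ) ≤ 1/(m+1:ℝ) := one_div_le_one_div_of_le (by positivity) h1
      exact le_trans h2 hx
    · intro m
      exact isClosed_le continuous_const (continuous_infDist_pt T)
    · ext x
      simp only [mem_iUnion, mem_setOf_eq, mem_compl_iff]
      constructor
      · rintro ⟨m, hm⟩ hx
        rw [infDist_zero_of_mem hx] at hm
        have : (0:ℝ) < 1/(m+1:ℝ) := by positivity
        linarith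
      · intro hx
        have hp : 0 < infDist x T := (hT.notMem_iff_infDist_pos h).mp hx
        obtain ⟨n, hn⟩ := exists_nat_one_div_lt hp
        exact ⟨n, hn.le⟩

lemma SigC_inter {E F : Set X} (hE : SigC E) (hF : SigC F) : SigC (E ∩ F) := by
  obtain ⟨W, hWm, hWc, hWu⟩ := hE
  obtain ⟨W', hWm', hWc', hWu'⟩ := hF
  refine ⟨fun n => W n ∩ W' n, fun a b hab => inter_subset_inter (hWm hab) (hWm' hab),
    fun n => (hWc n).inter (hWc' n), ?_⟩
  apply subset_antisymm
  · exact iUnion_subset fun n => inter_subset_inter (hWu ▸ subset_iUnion W n)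
      (hWu' ▸ subset_iUnion W' n)
  · rintro x ⟨hx1, hx2⟩
    rw [← hWu] at hx1; rw [← hWu'] at hx2
    obtain ⟨a, ha⟩ := mem_iUnion.mp hx1
    obtain ⟨b, hb⟩ := mem_iUnion.mp hx2
    exact mem_iUnion.mpr ⟨max a b, hWm (le_max_left a b) ha, hWm' (le_max_right a b) hb⟩

lemma SigC_iUnion {E : ℕ → Set X} (h : ∀ n, SigC (E n)) : SigC (⋃ n, E n) := by
  choose W hWm hWc hWu using h
  refine ⟨fun n => ⋃ i ∈ Finset.range (n+1), W i n, ?_, ?_, ?_⟩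
  · intro a b hab x hx
    simp only [mem_iUnion] at hx ⊢
    obtain ⟨i, hi, hx⟩ := hx
    exact ⟨i, by simp only [Finset.mem_range] at hi ⊢; omega, hWm i (by omega) hx⟩
  · intro n
    exact Set.Finite.isClosed_biUnion (Finset.range (n+1)).finite_toSet
      (fun i _ => hWc i n)
  · apply subset_antisymm
    · refine iUnion_subset fun n => ?_
      refine iUnion₂_subset fun i _ => ?_
      exact subset_iUnion_of_subset i (by rw [← hWu i]; exact subset_iUnion (W i) n)
    · refine iUnion_subset fun i x hx => ?_
      rw [← hWu i] at hx
      obtain ⟨k, hk⟩ := mem_iUnion.mp hx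
      simp only [mem_iUnion]
      exact ⟨max i k, i, by simp [Finset.mem_range], hWm i (le_max_right i k) hk⟩

lemma exists_sigC_gt {B : Set X} (f : B → ℝ) (g : ℕ → B → ℝ)
    (hg : ∀ n, Continuous (g n)) (hfg : ∀ b, Tendsto (fun n => g n b) atTop (𝓝 (f b)))
    (a : ℝ) : ∃ U : Set X, SigC U ∧ ∀ b : B, (↑b ∈ U ↔ a < f b) := by
  classical
  let E : ℕ → ℕ → Set B := fun i N => ⋂ n, {b | N ≤ n → a + 1/(i+1) ≤ g n b}
  have hEc : ∀ i N, IsClosed (E i N) := by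
    intro i N
    refine isClosed_iInter fun n => ?_
    by_cases hn : N ≤ n
    · have : {b : B | N ≤ n → a + 1/(i+1) ≤ g n b} = (g n) ⁻¹' (Ici (a + 1/(i+1))) := by
        ext b; simp [hn, mem_preimage]
      rw [this]
      exact isClosed_Ici.preimage (hg n)
    · have : {b : B | N ≤ n → a + 1/(i+1) ≤ g n b} = univ := by
        ext b; simp [hn]
      rw [this]; exact isClosed_univ
  have e : ℕ ≃ ℕ × ℕ := (Denumerable.eqv (ℕ × ℕ)).symm
  refine ⟨⋃ m, closure (Subtype.val '' E (e m).1 (e m).2), ?_, ?_⟩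
  · exact SigC_iUnion fun m => SigC_closed isClosed_closure
  · intro b
    have key : ∀ i N, (↑b ∈ closure (Subtype.val '' E i N)) ↔ b ∈ E i N := by
      intro i N
      rw [← closure_subtype, (hEc i N).closure_eq]
    constructor
    · intro hb
      obtain ⟨m, hm⟩ := mem_iUnion.mp hb
      rw [key] at hm
      have h1 : a + 1/((e m).1+1 : ℝ) ≤ f b := by
        refine ge_of_tendsto (hfg b) ?_
        filter_upwards [eventually_ge_atTop (e m).2] with n hn
        exact (mem_iInter.mp hm n) hn
      have : (0:ℝ) < 1/((e m).1+1 : ℝ) := by positivity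
      linarith
    · intro hb
      obtain ⟨i, hi⟩ := exists_nat_one_div_lt (sub_pos.mpr hb)
      have : ∀ᶠ n in atTop, a + 1/(i+1:ℝ) ≤ g n b := by
        have : ∀ᶠ n in atTop, g n b ∈ Ioi (a + 1/(i+1:ℝ)) :=
          (hfg b).eventually (Ioi_mem_nhds (by linarith))
        filter_upwards [this] with n hn using le_of_lt hn
      obtain ⟨N, hN⟩ := eventually_atTop.mp this
      have hbE : b ∈ E i N := mem_iInter.mpr fun n hn => hN n hn
      refine mem_iUnion.mpr ⟨e.symm (i, N), ?_⟩
      rw [key]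
      simpa using hbE

lemma reduction {B U U' : Set X} (hU : SigC U) (hU' : SigC U')
    (hcov : ∀ b ∈ B, b ∈ U ∪ U') :
    ∃ P Q : ℕ → Set X, Monotone P ∧ Monotone Q ∧ (∀ n, IsClosed (P n)) ∧ (∀ n, IsClosed (Q n))
      ∧ (⋃ n, P n) ⊆ U ∧ (⋃ n, Q n) ⊆ U' ∧ (⋃ n, P n) ∩ (⋃ n, Q n) = ∅
      ∧ ∀ b ∈ B, b ∈ (⋃ n, P n) ∪ ⋃ n, Q n := by
  classical
  obtain ⟨W, hWm, hWc, hWu⟩ := hU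
  obtain ⟨W', hWm', hWc', hWu'⟩ := hU'
  -- C pieces: W j minus earlier W', D pieces: W' j minus W up to j
  let C : Set X := ⋃ j, (W j ∩ (⋃ i ∈ Finset.range j, W' i)ᶜ)
  let D : Set X := ⋃ j, (W' j ∩ (⋃ i ∈ Finset.range (j+1), W i)ᶜ)
  have hCs : SigC C := by
    refine SigC_iUnion fun j => SigC_inter (SigC_closed (hWc j)) (SigC_compl_closed ?_)
    exact Set.Finite.isClosed_biUnion (Finset.range j).finite_toSet (fun i _ => hWc' i)
  have hDs : SigC D := by
    refine SigC_iUnion fun j => SigC_inter (SigC_closed (hWc' j)) (SigC_compl_closed ?_)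
    exact Set.Finite.isClosed_biUnion (Finset.range (j+1)).finite_toSet (fun i _ => hWc i)
  obtain ⟨P, hPm, hPc, hPu⟩ := hCs
  obtain ⟨Q, hQm, hQc, hQu⟩ := hDs
  refine ⟨P, Q, hPm, hQm, hPc, hQc, ?_, ?_, ?_, ?_⟩
  · rw [hPu, ← hWu]
    exact iUnion_subset fun j => (inter_subset_left).trans (subset_iUnion W j)
  · rw [hQu, ← hWu']
    exact iUnion_subset fun j => (inter_subset_left).trans (subset_iUnion W' j)
  · rw [hPu, hQu]
    rw [eq_empty_iff_forall_notMem]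
    rintro x ⟨hx1, hx2⟩
    obtain ⟨j, hxW, hxe⟩ := by simpa only [C, mem_iUnion, mem_inter_iff] using hx1
    obtain ⟨i, hxW', hxe'⟩ := by simpa only [D, mem_iUnion, mem_inter_iff] using hx2
    simp only [mem_compl_iff, mem_iUnion, Finset.mem_range, not_exists] at hxe hxe'
    rcases lt_or_ge i j with h | h
    · exact hxe i h hxW'
    · exact hxe' j (by omega) hxW
  · intro b hb
    rw [hPu, hQu]
    rcases hcov b hb with hbU | hbU'
    · have hbW : ∃ j, b ∈ W j := mem_iUnion.mp (hWu ▸ hbU)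
      by_cases hW' : ∃ i, b ∈ W' i
      · set j0 := Nat.find hbW with hj0
        set i0 := Nat.find hW' with hi0
        rcases lt_or_ge i0 j0 with h | h
        · -- b ∈ D piece i0
          refine Or.inr (mem_iUnion.mpr ⟨i0, Nat.find_spec hW', ?_⟩)
          simp only [mem_compl_iff, mem_iUnion, Finset.mem_range, not_exists]
          intro l hl hbl
          exact absurd hbl (by
            have : j0 ≤ l := Nat.find_le hbl
            omega)
        · -- b ∈ C piece j0
          refine Or.inl (mem_iUnion.mpr ⟨j0, Nat.find_spec hbW, ?_⟩)
          simp only [mem_compl_iff, mem_iUnion, Finset.mem_range, not_exists]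
          intro l hl hbl
          have : i0 ≤ l := Nat.find_le hbl
          omega
      · refine Or.inl (mem_iUnion.mpr ⟨Nat.find hbW, Nat.find_spec hbW, ?_⟩)
        simp only [mem_compl_iff, mem_iUnion, Finset.mem_range, not_exists]
        intro l _ hbl
        exact hW' ⟨l, hbl⟩
    · by_cases hW : ∃ j, b ∈ W j
      · -- same as above symmetric; b ∈ U' and maybe U
        set j0 := Nat.find hW with hj0
        have hbW' : ∃ i, b ∈ W' i := mem_iUnion.mp (hWu' ▸ hbU')
        set i0 := Nat.find hbW' with hi0
        rcases lt_or_ge i0 j0 with h | h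
        · refine Or.inr (mem_iUnion.mpr ⟨i0, Nat.find_spec hbW', ?_⟩)
          simp only [mem_compl_iff, mem_iUnion, Finset.mem_range, not_exists]
          intro l hl hbl
          have : j0 ≤ l := Nat.find_le hbl
          omega
        · refine Or.inl (mem_iUnion.mpr ⟨j0, Nat.find_spec hW, ?_⟩)
          simp only [mem_compl_iff, mem_iUnion, Finset.mem_range, not_exists]
          intro l hl hbl
          have : i0 ≤ l := Nat.find_le hbl
          omega
      · have hbW' : ∃ i, b ∈ W' i := mem_iUnion.mp (hWu' ▸ hbU')
        refine Or.inr (mem_iUnion.mpr ⟨Nat.find hbW', Nat.find_spec hbW', ?_⟩)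
        simp only [mem_compl_iff, mem_iUnion, Finset.mem_range, not_exists]
        intro l _ hbl
        exact hW ⟨l, hbl⟩

lemma indicator_approx (P Q : ℕ → Set X) (hPm : Monotone P) (hQm : Monotone Q)
    (hPc : ∀ n, IsClosed (P n)) (hQc : ∀ n, IsClosed (Q n))
    (hdisj : (⋃ n, P n) ∩ (⋃ n, Q n) = ∅) :
    ∃ V : ℕ → X → ℝ, (∀ k, Continuous (V k)) ∧ (∀ k x, V k x ∈ Icc (0:ℝ) 1) ∧
      (∀ x ∈ ⋃ n, P n, ∀ᶠ k in atTop, V k x = 1) ∧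
      (∀ x ∈ ⋃ n, Q n, ∀ᶠ k in atTop, V k x = 0) := by
  classical
  set tP : ℕ → ℕ → X → ℝ := fun j k x =>
    if (P j).Nonempty then max 0 (1 - k * infDist x (P j)) else 0 with htP
  set tQ : ℕ → ℕ → X → ℝ := fun j k x =>
    if (Q j).Nonempty then min 1 (k * infDist x (Q j)) else 1 with htQ
  set V : ℕ → X → ℝ := fun k x => min 1 (∑ j ∈ Finset.range k, tP j k x * tQ j k x) with hV
  have htPmem : ∀ j k x, tP j k x ∈ Icc (0:ℝ) 1 := by
    intro j k x
    simp only [htP]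
    split
    · constructor
      · exact le_max_left 0 _
      · refine max_le zero_le_one (by
          have h1 : (0:ℝ) ≤ (k:ℝ) * infDist x (P j) :=
            mul_nonneg (Nat.cast_nonneg k) infDist_nonneg
          linarith)
    · exact ⟨le_refl 0, zero_le_one⟩
  have htQmem : ∀ j k x, tQ j k x ∈ Icc (0:ℝ) 1 := by
    intro j k x
    simp only [htQ]
    split
    · exact ⟨le_min zero_le_one (mul_nonneg (Nat.cast_nonneg k) infDist_nonneg),
        min_le_left _ _⟩
    · exact ⟨zero_le_one, le_refl 1⟩
  have hterm_nonneg : ∀ j k x, 0 ≤ tP j k x * tQ j k x := fun j k x =>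
    mul_nonneg (htPmem j k x).1 (htQmem j k x).1
  have hterm_le_one : ∀ j k x, tP j k x * tQ j k x ≤ 1 := fun j k x =>
    mul_le_one₀ (htPmem j k x).2 (htQmem j k x).1 (htQmem j k x).2
  rw [eq_empty_iff_forall_notMem] at hdisj
  have hnotP : ∀ x ∈ ⋃ n, Q n, ∀ j, x ∉ P j := by
    intro x hx j hxP
    exact hdisj x ⟨mem_iUnion.mpr ⟨j, hxP⟩, hx⟩
  have hnotQ : ∀ x ∈ ⋃ n, P n, ∀ j, x ∉ Q j := by
    intro x hx j hxQ
    exact hdisj x ⟨hx, mem_iUnion.mpr ⟨j, hxQ⟩⟩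
  refine ⟨V, ?_, ?_, ?_, ?_⟩
  · intro k
    refine continuous_const.min ?_
    refine continuous_finset_sum _ fun j _ => Continuous.mul ?_ ?_
    · simp only [htP]; split
      · exact continuous_const.max (continuous_const.sub
          (continuous_const.mul (continuous_infDist_pt (P j))))
      · exact continuous_const
    · simp only [htQ]; split
      · exact continuous_const.min (continuous_const.mul (continuous_infDist_pt (Q j)))
      · exact continuous_const
  · intro k x
    constructor
    · exact le_min zero_le_one (Finset.sum_nonneg fun j _ => hterm_nonneg j k x)
    · exact min_le_left _ _
  · -- x in union of P: eventually V = 1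
    intro x hx
    obtain ⟨j0, hj0⟩ := mem_iUnion.mp hx
    have hPne : (P j0).Nonempty := ⟨x, hj0⟩
    have htPone : ∀ k, tP j0 k x = 1 := by
      intro k
      simp only [htP, if_pos hPne, infDist_zero_of_mem hj0, mul_zero, sub_zero, max_eq_right zero_le_one]
    by_cases hQne : (Q j0).Nonempty
    · have hxQ : x ∉ Q j0 := hnotQ x hx j0
      have he : 0 < infDist x (Q j0) := ((hQc j0).notMem_iff_infDist_pos hQne).mp hxQ
      obtain ⟨K, hK⟩ := exists_nat_ge (1 / infDist x (Q j0))
      filter_upwards [eventually_ge_atTop (max (j0+1) K)] with k hk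
      have hkj : j0 ∈ Finset.range k := Finset.mem_range.mpr (by omega)
      have hkK : (K:ℝ) ≤ k := Nat.cast_le.mpr (le_trans (le_max_right _ _) hk)
      have h1 : (1:ℝ) ≤ (k:ℝ) * infDist x (Q j0) := by
        rw [div_le_iff₀ he] at hK
        calc (1:ℝ) ≤ K * infDist x (Q j0) := hK
        _ ≤ k * infDist x (Q j0) := by
              exact mul_le_mul_of_nonneg_right hkK infDist_nonneg
      have htQone : tQ j0 k x = 1 := by
        simp only [htQ, if_pos hQne]
        exact min_eq_left h1
      have hsum : (1:ℝ) ≤ ∑ j ∈ Finset.range k, tP j k x * tQ j k x := by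
        calc (1:ℝ) = tP j0 k x * tQ j0 k x := by rw [htPone, htQone, mul_one]
        _ ≤ ∑ j ∈ Finset.range k, tP j k x * tQ j k x :=
            Finset.single_le_sum (fun j _ => hterm_nonneg j k x) hkj
      simp only [hV]
      exact min_eq_left hsum
    · have htQone : ∀ k, tQ j0 k x = 1 := by
        intro k; simp only [htQ, if_neg hQne]
      filter_upwards [eventually_ge_atTop (j0+1)] with k hk
      have hkj : j0 ∈ Finset.range k := Finset.mem_range.mpr (by omega)
      have hsum : (1:ℝ) ≤ ∑ j ∈ Finset.range k, tP j k x * tQ j k x := by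
        calc (1:ℝ) = tP j0 k x * tQ j0 k x := by rw [htPone, htQone k, mul_one]
        _ ≤ ∑ j ∈ Finset.range k, tP j k x * tQ j k x :=
            Finset.single_le_sum (fun j _ => hterm_nonneg j k x) hkj
      simp only [hV]
      exact min_eq_left hsum
  · -- x in union of Q: eventually V = 0
    intro x hx
    obtain ⟨j1, hj1⟩ := mem_iUnion.mp hx
    -- for j ≥ j1 : tQ j k x = 0
    have hQzero : ∀ j, j1 ≤ j → ∀ k, tQ j k x = 0 := by
      intro j hj k
      have hxQ : x ∈ Q j := hQm hj hj1
      have hne : (Q j).Nonempty := ⟨x, hxQ⟩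
      simp only [htQ, if_pos hne, infDist_zero_of_mem hxQ, mul_zero]
      exact min_eq_right zero_le_one
    -- for each j < j1 with P j nonempty, eventually tP j k x = 0
    have hPev : ∀ᶠ k in atTop, ∀ j ∈ Finset.range j1, tP j k x = 0 := by
      rw [Filter.eventually_all_finset]
      intro j _
      by_cases hPne : (P j).Nonempty
      · have hxP : x ∉ P j := hnotP x hx j
        have hd : 0 < infDist x (P j) := ((hPc j).notMem_iff_infDist_pos hPne).mp hxP
        obtain ⟨K, hK⟩ := exists_nat_ge (1 / infDist x (P j))
        filter_upwards [eventually_ge_atTop K] with k hk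
        have h1 : (1:ℝ) ≤ (k:ℝ) * infDist x (P j) := by
          rw [div_le_iff₀ hd] at hK
          calc (1:ℝ) ≤ K * infDist x (P j) := hK
          _ ≤ k * infDist x (P j) :=
                mul_le_mul_of_nonneg_right (Nat.cast_le.mpr hk) infDist_nonneg
        simp only [htP, if_pos hPne]
        exact max_eq_left (by linarith)
      · exact Filter.Eventually.of_forall fun k => by simp only [htP, if_neg hPne]
    filter_upwards [hPev] with k hk
    have hsum : ∑ j ∈ Finset.range k, tP j k x * tQ j k x = 0 := by
      refine Finset.sum_eq_zero fun j hj => ?_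
      rcases lt_or_ge j j1 with h | h
      · rw [hk j (Finset.mem_range.mpr h), zero_mul]
      · rw [hQzero j h k, mul_zero]
    simp only [hV, hsum]
    exact min_eq_right zero_le_one

noncomputable def clampR (c y : ℝ) : ℝ := max (-c) (min c y)

lemma clampR_abs_le {c y : ℝ} (hc : 0 ≤ c) : |clampR c y| ≤ c := by
  rw [abs_le]
  constructor
  · exact le_max_left _ _
  · exact max_le (by linarith) (min_le_left _ _)

lemma clampR_eq_self {c y : ℝ} (h : |y| ≤ c) : clampR c y = y := by
  rw [abs_le] at h
  unfold clampR
  rw [min_eq_right h.2, max_eq_right h.1]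

lemma clampR_continuous (c : ℝ) : Continuous (clampR c) :=
  continuous_const.max (continuous_const.min continuous_id)

lemma clampR_lipschitz (c a b : ℝ) : |clampR c a - clampR c b| ≤ |a - b| := by
  unfold clampR
  calc |max (-c) (min c a) - max (-c) (min c b)|
      = |min c a ⊔ (-c) - min c b ⊔ (-c)| := by rw [max_comm (-c), max_comm (-c)]
    _ ≤ |min c a - min c b| := abs_max_sub_max_le_abs _ _ _
    _ ≤ |a - b| := by
        have := abs_min_sub_min_le_max c a c b
        simpa using this

lemma tendsto_tsum_dom (F : ℕ → ℕ → ℝ) (L : ℕ → ℝ) (c : ℕ → ℝ) (hc : Summable c)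
    (hb : ∀ k p, |F k p| ≤ c p) (hlim : ∀ p, Tendsto (fun k => F k p) atTop (𝓝 (L p))) :
    Tendsto (fun k => ∑' p, F k p) atTop (𝓝 (∑' p, L p)) := by
  have hLb : ∀ p, |L p| ≤ c p := fun p =>
    le_of_tendsto ((hlim p).abs) (Filter.Eventually.of_forall fun k => hb k p)
  have hFs : ∀ k, Summable (fun p => F k p) := fun k =>
    Summable.of_norm_bounded hc (fun p => by simpa using hb k p)
  have hLs : Summable L := Summable.of_norm_bounded hc (fun p => by simpa using hLb p)
  rw [Metric.tendsto_atTop]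
  intro ε hε
  -- tail control
  have htail : Tendsto (fun M => ∑' p, c (p + M)) atTop (𝓝 0) := by
    have h1 : ∀ M, ∑' p, c (p + M) = (∑' p, c p) - ∑ i ∈ Finset.range M, c i := by
      intro M
      have := Summable.sum_add_tsum_nat_add (f := c) M hc
      linarith
    have h2 : Tendsto (fun M => (∑' p, c p) - ∑ i ∈ Finset.range M, c i) atTop (𝓝 0) := by
      have := hc.hasSum.tendsto_sum_nat
      have h3 := Tendsto.sub (tendsto_const_nhds (x := ∑' p, c p)) this
      simpa using h3
    exact h2.congr (fun M => (h1 M).symm)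
  obtain ⟨M, hM⟩ := Metric.tendsto_atTop.mp htail (ε/3) (by linarith)
  have hMtail : ∑' p, c (p + M) < ε/3 := by
    have := hM M le_rfl
    rw [Real.dist_eq, sub_zero] at this
    calc ∑' p, c (p + M) ≤ |∑' p, c (p + M)| := le_abs_self _
      _ < ε/3 := this
  -- finite part converges
  have hfin : Tendsto (fun k => ∑ i ∈ Finset.range M, F k i) atTop
      (𝓝 (∑ i ∈ Finset.range M, L i)) :=
    tendsto_finset_sum _ (fun i _ => hlim i)
  have hev := Metric.tendsto_atTop.mp hfin (ε/3) (by linarith)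
  obtain ⟨N, hN⟩ := hev
  refine ⟨N, fun k hk => ?_⟩
  have hsplitF : ∑' p, F k p = ∑ i ∈ Finset.range M, F k i + ∑' p, F k (p + M) :=
    (Summable.sum_add_tsum_nat_add M (hFs k)).symm
  have hsplitL : ∑' p, L p = ∑ i ∈ Finset.range M, L i + ∑' p, L (p + M) :=
    (Summable.sum_add_tsum_nat_add M hLs).symm
  have hscM : Summable (fun p => c (p + M)) := (summable_nat_add_iff M).mpr hc
  have htailF : |∑' p, F k (p + M)| ≤ ∑' p, c (p + M) := by
    have hsF : Summable (fun p => F k (p + M)) := (summable_nat_add_iff M).mpr (hFs k)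
    have hsFa : Summable (fun p => |F k (p + M)|) := hsF.abs
    calc |∑' p, F k (p + M)| ≤ ∑' p, |F k (p + M)| := by
          simpa using norm_tsum_le_tsum_norm (f := fun p => F k (p + M)) (by simpa using hsFa)
      _ ≤ ∑' p, c (p + M) := Summable.tsum_le_tsum (fun p => hb k (p + M)) hsFa hscM
  have htailL : |∑' p, L (p + M)| ≤ ∑' p, c (p + M) := by
    have hsL : Summable (fun p => L (p + M)) := (summable_nat_add_iff M).mpr hLs
    have hsLa : Summable (fun p => |L (p + M)|) := hsL.abs
    calc |∑' p, L (p + M)| ≤ ∑' p, |L (p + M)| := by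
          simpa using norm_tsum_le_tsum_norm (f := fun p => L (p + M)) (by simpa using hsLa)
      _ ≤ ∑' p, c (p + M) := Summable.tsum_le_tsum (fun p => hLb (p + M)) hsLa hscM
  rw [Real.dist_eq]
  have hNk := hN k hk
  rw [Real.dist_eq] at hNk
  calc |∑' p, F k p - ∑' p, L p|
      = |(∑ i ∈ Finset.range M, F k i - ∑ i ∈ Finset.range M, L i)
          + (∑' p, F k (p + M) - ∑' p, L (p + M))| := by
          rw [hsplitF, hsplitL]; congr 1; ring
    _ ≤ |∑ i ∈ Finset.range M, F k i - ∑ i ∈ Finset.range M, L i|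
          + (|∑' p, F k (p + M)| + |∑' p, L (p + M)|) := by
          refine le_trans (abs_add_le _ _) ?_
          gcongr
          exact abs_sub _ _
    _ < ε/3 + (ε/3 + ε/3) := by
          have : |∑' p, F k (p + M)| + |∑' p, L (p + M)| ≤ ε/3 + ε/3 := by
            have h1 := le_trans htailF hMtail.le
            have h2 := le_trans htailL hMtail.le
            linarith
          linarith
    _ = ε := by ring


lemma exists_sigC_lt {B : Set X} (f : B → ℝ) (g : ℕ → B → ℝ)
    (hg : ∀ n, Continuous (g n)) (hfg : ∀ b, Tendsto (fun n => g n b) atTop (𝓝 (f b)))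
    (a : ℝ) : ∃ U : Set X, SigC U ∧ ∀ b : B, (↑b ∈ U ↔ f b < a) := by
  obtain ⟨U, hU, hU2⟩ := exists_sigC_gt (fun b => -f b) (fun n b => -(g n b))
    (fun n => (hg n).neg) (fun b => (hfg b).neg) (-a)
  exact ⟨U, hU, fun b => (hU2 b).trans (by constructor <;> intro <;> linarith)⟩

lemma level_approx {B : Set X} (f : B → ℝ) (g : ℕ → B → ℝ)
    (hg : ∀ n, Continuous (g n)) (hfg : ∀ b, Tendsto (fun n => g n b) atTop (𝓝 (f b)))
    (a' a : ℝ) (haa : a' < a) :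
    ∃ (V : ℕ → X → ℝ) (χ : B → ℝ),
      (∀ k, Continuous (V k)) ∧ (∀ k x, V k x ∈ Icc (0:ℝ) 1) ∧
      (∀ b : B, Tendsto (fun k => V k ↑b) atTop (𝓝 (χ b))) ∧
      (∀ b, χ b = 0 ∨ χ b = 1) ∧ (∀ b, a ≤ f b → χ b = 1) ∧ (∀ b, f b ≤ a' → χ b = 0) := by
  classical
  obtain ⟨U1, hU1, hU1t⟩ := exists_sigC_gt f g hg hfg a'
  obtain ⟨U2, hU2, hU2t⟩ := exists_sigC_lt f g hg hfg a
  have hcov : ∀ x ∈ B, x ∈ U1 ∪ U2 := by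
    intro x hx
    rcases lt_or_ge a' (f ⟨x, hx⟩) with h | h
    · exact Or.inl ((hU1t ⟨x, hx⟩).mpr h)
    · exact Or.inr ((hU2t ⟨x, hx⟩).mpr (lt_of_le_of_lt h haa))
  obtain ⟨P, Q, hPm, hQm, hPc, hQc, hPU, hQU, hdisj, hcov2⟩ := reduction hU1 hU2 hcov
  obtain ⟨V, hVc, hVm, hV1, hV0⟩ := indicator_approx P Q hPm hQm hPc hQc hdisj
  refine ⟨V, fun b => if (↑b : X) ∈ ⋃ n, P n then 1 else 0, hVc, hVm, ?_, ?_, ?_, ?_⟩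
  · intro b
    by_cases hb : (↑b : X) ∈ ⋃ n, P n
    · simp only []
      rw [if_pos hb]
      exact Tendsto.congr' (by filter_upwards [hV1 ↑b hb] with k hk using hk.symm)
        tendsto_const_nhds
    · have hbQ : (↑b : X) ∈ ⋃ n, Q n := by
        rcases hcov2 ↑b b.2 with h | h
        · exact absurd h hb
        · exact h
      simp only []
      rw [if_neg hb]
      exact Tendsto.congr' (by filter_upwards [hV0 ↑b hbQ] with k hk using hk.symm)
        tendsto_const_nhds
  · intro b; by_cases hb : (↑b : X) ∈ ⋃ n, P n
    · exact Or.inr (if_pos hb)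
    · exact Or.inl (if_neg hb)
  · intro b hab
    have hb : (↑b : X) ∈ ⋃ n, P n := by
      by_contra hb
      have hbQ : (↑b : X) ∈ ⋃ n, Q n := by
        rcases hcov2 ↑b b.2 with h | h
        · exact absurd h hb
        · exact h
      have : f b < a := by
        have := hQU hbQ
        have h2 := (hU2t b).mp this
        simpa using h2
      linarith
    exact if_pos hb
  · intro b hab
    have hb : (↑b : X) ∉ ⋃ n, P n := by
      intro hb
      have := hPU hb
      have h2 := (hU1t b).mp this
      have hbb : (⟨↑b, b.2⟩ : B) = b := Subtype.ext rfl
      linarith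
    exact if_neg hb

lemma bounded_case {B : Set X} (f : B → ℝ) (hf : ∀ b, f b ∈ Icc (-1:ℝ) 1)
    (g : ℕ → B → ℝ) (hg : ∀ n, Continuous (g n))
    (hfg : ∀ b, Tendsto (fun n => g n b) atTop (𝓝 (f b))) :
    ∃ G : ℕ → X → ℝ, (∀ k, Continuous (G k)) ∧
      ∀ b : B, Tendsto (fun k => G k ↑b) atTop (𝓝 (f b)) := by
  classical
  have key : ∀ m i : ℕ, ∃ (V : ℕ → X → ℝ) (χ : B → ℝ),
      (∀ k, Continuous (V k)) ∧ (∀ k x, V k x ∈ Icc (0:ℝ) 1) ∧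
      (∀ b : B, Tendsto (fun k => V k ↑b) atTop (𝓝 (χ b))) ∧
      (∀ b, χ b = 0 ∨ χ b = 1) ∧
      (∀ b, -1 + ((i:ℝ)+1)/((m:ℝ)+1) ≤ f b → χ b = 1) ∧
      (∀ b, f b ≤ -1 + (i:ℝ)/((m:ℝ)+1) → χ b = 0) := by
    intro m i
    exact level_approx f g hg hfg _ _ (by
      have hm : (0:ℝ) < (m:ℝ)+1 := by positivity
      rw [add_lt_add_iff_left, div_lt_div_iff_of_pos_right hm]
      linarith)
  choose V χ hVc hVm hVt h01 h1 h0 using key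
  set H : ℕ → ℕ → X → ℝ := fun m k x =>
    -1 + ((m:ℝ)+1)⁻¹ * ∑ i ∈ Finset.range (2*(m+1)), V m i k x with hH
  set h : ℕ → B → ℝ := fun m b =>
    -1 + ((m:ℝ)+1)⁻¹ * ∑ i ∈ Finset.range (2*(m+1)), χ m i b with hh
  have hHc : ∀ m k, Continuous (H m k) := by
    intro m k
    exact continuous_const.add (continuous_const.mul
      (continuous_finset_sum _ fun i _ => hVc m i k))
  have hHt : ∀ m (b : B), Tendsto (fun k => H m k ↑b) atTop (𝓝 (h m b)) := by
    intro m b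
    exact tendsto_const_nhds.add (tendsto_const_nhds.mul
      (tendsto_finset_sum _ fun i _ => hVt m i b))
  -- counting estimate
  have herr : ∀ m (b : B), |h m b - f b| ≤ ((m:ℝ)+1)⁻¹ := by
    intro m b
    set t := f b with hht
    obtain ⟨ht1, ht2⟩ := hf b
    set M : ℕ := m + 1 with hM
    have hMpos : (0:ℝ) < (M:ℝ) := by positivity
    have hMr : ((m:ℝ)+1) = (M:ℝ) := by push_cast [hM]; ring
    set r : ℕ := ⌊(M:ℝ)*(t+1)⌋₊ with hr
    have htnn : (0:ℝ) ≤ (M:ℝ)*(t+1) := by nlinarith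
    have hfl : ((r:ℝ)) ≤ (M:ℝ)*(t+1) := Nat.floor_le htnn
    have hfl2 : (M:ℝ)*(t+1) < (r:ℝ) + 1 := Nat.lt_floor_add_one _
    have hr2M : r ≤ 2*M := by
      have : (M:ℝ)*(t+1) ≤ ((2*M : ℕ):ℝ) := by push_cast; nlinarith
      calc r = ⌊(M:ℝ)*(t+1)⌋₊ := rfl
        _ ≤ ⌊((2*M:ℕ):ℝ)⌋₊ := Nat.floor_mono this
        _ = 2*M := Nat.floor_natCast _
    set S := ∑ i ∈ Finset.range (2*M), χ m i b with hS
    have hχnn : ∀ i, 0 ≤ χ m i b := by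
      intro i; rcases h01 m i b with h' | h' <;> rw [h'] <;> norm_num
    have hSlow : (r:ℝ) ≤ S := by
      have hsub : Finset.range r ⊆ Finset.range (2*M) := by
        intro i hi; simp only [Finset.mem_range] at *; omega
      have hone : ∀ i ∈ Finset.range r, χ m i b = 1 := by
        intro i hi
        simp only [Finset.mem_range] at hi
        refine h1 m i b ?_
        have hi1 : ((i:ℝ)+1) ≤ (r:ℝ) := by exact_mod_cast Nat.succ_le_of_lt hi
        have : ((i:ℝ)+1)/((m:ℝ)+1) ≤ t + 1 := by
          rw [hMr, div_le_iff₀ hMpos]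
          nlinarith
        linarith
      calc (r:ℝ) = ∑ i ∈ Finset.range r, χ m i b := by
            rw [Finset.sum_congr rfl hone]; simp
        _ ≤ S := Finset.sum_le_sum_of_subset_of_nonneg hsub (fun i _ _ => hχnn i)
    have hSup : S ≤ (r:ℝ) + 1 := by
      have hle : ∀ i ∈ Finset.range (2*M), χ m i b ≤ if (i:ℝ) < (M:ℝ)*(t+1) then 1 else 0 := by
        intro i _
        rcases h01 m i b with h' | h'
        · rw [h']; split <;> norm_num
        · rw [h']
          have hnot : ¬ (t ≤ -1 + (i:ℝ)/((m:ℝ)+1)) := by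
            intro hcon
            have hz := h0 m i b hcon
            rw [hz] at h'; norm_num at h'
          push_neg at hnot
          rw [hMr] at hnot
          have hdiv : (i:ℝ)/(M:ℝ) < t + 1 := by linarith
          rw [div_lt_iff₀ hMpos] at hdiv
          have hiM : (i:ℝ) < (M:ℝ)*(t+1) := by nlinarith
          rw [if_pos hiM]
      calc S ≤ ∑ i ∈ Finset.range (2*M), (if (i:ℝ) < (M:ℝ)*(t+1) then (1:ℝ) else 0) :=
            Finset.sum_le_sum hle
        _ = (((Finset.range (2*M)).filter (fun i : ℕ => (i:ℝ) < (M:ℝ)*(t+1))).card : ℝ) :=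
            Finset.sum_boole _ _
        _ ≤ ((Finset.range (r+1)).card : ℝ) := by
            refine Nat.cast_le.mpr (Finset.card_le_card ?_)
            intro i hi
            simp only [Finset.mem_filter, Finset.mem_range] at hi ⊢
            have h2 : (i:ℝ) ≤ (M:ℝ)*(t+1) := le_of_lt hi.2
            have h3 := Nat.le_floor h2
            omega
        _ = (r:ℝ) + 1 := by rw [Finset.card_range]; push_cast; ring
    -- conclude
    have hhm : h m b = -1 + ((M:ℝ))⁻¹ * S := by simp only [hh]; rw [hMr]
    set u := ((M:ℝ))⁻¹ with huu
    have hu : u * (M:ℝ) = 1 := inv_mul_cancel₀ (ne_of_gt hMpos)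
    have hun : 0 ≤ u := by positivity
    have hiu : ((m:ℝ)+1)⁻¹ = u := by rw [hMr]
    rw [hiu, hhm, abs_le]
    have hS1 : (M:ℝ)*(t+1) - 1 ≤ S := by linarith
    have hS2 : S ≤ (M:ℝ)*(t+1) + 1 := by linarith
    constructor
    · nlinarith [mul_le_mul_of_nonneg_left hS1 hun]
    · nlinarith [mul_le_mul_of_nonneg_left hS2 hun]
  -- series assembly
  have hcast : ∀ p : ℕ, (((2^p - 1 : ℕ) : ℝ) + 1) = (2:ℝ)^p := by
    intro p
    have h1 : (2^p - 1 : ℕ) + 1 = 2^p := Nat.sub_add_cancel Nat.one_le_two_pow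
    calc (((2^p - 1 : ℕ) : ℝ) + 1) = (((2^p - 1 + 1 : ℕ)) : ℝ) := by push_cast; ring
      _ = (2:ℝ)^p := by rw [h1]; push_cast; ring
  have herr2 : ∀ p (b : B), |h (2^p - 1) b - f b| ≤ (1/2:ℝ)^p := by
    intro p b
    have := herr (2^p - 1) b
    rw [hcast p] at this
    calc |h (2^p - 1) b - f b| ≤ ((2:ℝ)^p)⁻¹ := this
      _ = (1/2:ℝ)^p := by rw [one_div, inv_pow]
  set c : ℕ → ℝ := fun p => 3 * (1/2:ℝ)^p with hc
  have hcnn : ∀ p, 0 ≤ c p := by intro p; simp only [hc]; positivity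
  have hcs : Summable c := (summable_geometric_of_lt_one (by norm_num) (by norm_num)).mul_left 3
  have hdiffb : ∀ p (b : B), |h (2^(p+1) - 1) b - h (2^p - 1) b| ≤ c p := by
    intro p b
    have e1 := herr2 (p+1) b
    have e2 := herr2 p b
    have : |h (2^(p+1) - 1) b - h (2^p - 1) b| ≤ (1/2:ℝ)^(p+1) + (1/2:ℝ)^p := by
      calc |h (2^(p+1) - 1) b - h (2^p - 1) b|
          = |(h (2^(p+1) - 1) b - f b) - (h (2^p - 1) b - f b)| := by ring_nf
        _ ≤ |h (2^(p+1) - 1) b - f b| + |h (2^p - 1) b - f b| := abs_sub _ _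
        _ ≤ (1/2:ℝ)^(p+1) + (1/2:ℝ)^p := add_le_add e1 e2
    refine le_trans this ?_
    simp only [hc]
    rw [pow_succ]
    nlinarith [pow_nonneg (by norm_num : (0:ℝ) ≤ 1/2) p]
  set D : ℕ → ℕ → X → ℝ := fun p k x =>
    clampR (c p) (H (2^(p+1) - 1) k x - H (2^p - 1) k x) with hD
  set G : ℕ → X → ℝ := fun k x => H 0 k x + ∑' p, D p k x with hG
  refine ⟨G, ?_, ?_⟩
  · intro k
    refine (hHc 0 k).add ?_
    refine continuous_tsum (fun p => ?_) hcs (fun p x => ?_)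
    · exact (clampR_continuous (c p)).comp (((hHc _ k).sub (hHc _ k)))
    · simpa using clampR_abs_le (hcnn p)
  · intro b
    have hDt : ∀ p, Tendsto (fun k => D p k ↑b) atTop
        (𝓝 (h (2^(p+1) - 1) b - h (2^p - 1) b)) := by
      intro p
      have hlim : Tendsto (fun k => H (2^(p+1) - 1) k ↑b - H (2^p - 1) k ↑b) atTop
          (𝓝 (h (2^(p+1) - 1) b - h (2^p - 1) b)) := (hHt _ b).sub (hHt _ b)
      have hcl : Tendsto (fun k => clampR (c p) (H (2^(p+1) - 1) k ↑b - H (2^p - 1) k ↑b))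
          atTop (𝓝 (clampR (c p) (h (2^(p+1) - 1) b - h (2^p - 1) b))) :=
        ((clampR_continuous (c p)).tendsto _).comp hlim
      rw [clampR_eq_self (hdiffb p b)] at hcl
      exact hcl
    have hDb : ∀ k p, |D p k ↑b| ≤ c p := fun k p => clampR_abs_le (hcnn p)
    have hts : Tendsto (fun k => ∑' p, D p k ↑b) atTop
        (𝓝 (∑' p, (h (2^(p+1) - 1) b - h (2^p - 1) b))) :=
      tendsto_tsum_dom (fun k p => D p k ↑b) _ c hcs hDb hDt
    -- identify the tsum
    have hsumm : Summable (fun p => h (2^(p+1) - 1) b - h (2^p - 1) b) :=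
      Summable.of_norm_bounded hcs (fun p => by simpa using hdiffb p b)
    have hpart : Tendsto (fun Mn => ∑ p ∈ Finset.range Mn, (h (2^(p+1) - 1) b - h (2^p - 1) b))
        atTop (𝓝 (f b - h (2^0 - 1) b)) := by
      have hps : ∀ Mn, ∑ p ∈ Finset.range Mn, (h (2^(p+1) - 1) b - h (2^p - 1) b)
          = h (2^Mn - 1) b - h (2^0 - 1) b := fun Mn => Finset.sum_range_sub (fun p => h (2^p - 1) b) Mn
      have hhM : Tendsto (fun Mn => h (2^Mn - 1) b) atTop (𝓝 (f b)) := by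
        rw [tendsto_iff_dist_tendsto_zero]
        have hpow : Tendsto (fun Mn : ℕ => (1/2:ℝ)^Mn) atTop (𝓝 0) :=
          tendsto_pow_atTop_nhds_zero_of_lt_one (by norm_num) (by norm_num)
        exact squeeze_zero (fun _ => dist_nonneg)
          (fun Mn => by rw [Real.dist_eq]; exact herr2 Mn b) hpow
      have := hhM.sub (tendsto_const_nhds (x := h (2^0 - 1) b))
      exact this.congr (fun Mn => (hps Mn).symm)
    have htsum_eq : (∑' p, (h (2^(p+1) - 1) b - h (2^p - 1) b)) = f b - h (2^0 - 1) b :=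
      tendsto_nhds_unique hsumm.hasSum.tendsto_sum_nat hpart
    rw [htsum_eq] at hts
    have h00 : (2:ℕ)^0 - 1 = 0 := rfl
    simp only [h00] at hts
    have hfin := (hHt 0 b).add hts
    have heq : h 0 b + (f b - h 0 b) = f b := by ring
    rw [heq] at hfin
    exact hfin

end Auxiliary

/-- For `B ⊆ B'` with the induced metric, `f : B → ℝ` is a pointwise limit of continuous
functions on `B` iff it is a pointwise limit of restrictions of continuous functions on `B'`. -/
theorem pointwise_limit_iff_relative_pointwise_limit
    {B' : Type*} [MetricSpace B'] (B : Set B') (f : B → ℝ) :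
    (∃ g : ℕ → B → ℝ, (∀ n, Continuous (g n)) ∧
      ∀ b : B, Tendsto (fun n => g n b) atTop (nhds (f b))) ↔
    (∃ G : ℕ → B' → ℝ, (∀ n, Continuous (G n)) ∧
      ∀ b : B, Tendsto (fun n => G n (b : B')) atTop (nhds (f b))) := by
  constructor
  · rintro ⟨g, hg, hfg⟩
    -- transfer to a bounded problem via x ↦ x / (1 + |x|)
    set φ : ℝ → ℝ := fun x => x / (1 + |x|) with hφ
    have hden : ∀ x : ℝ, (0:ℝ) < 1 + |x| := fun x => by positivity
    have hφc : Continuous φ :=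
      continuous_id.div (continuous_const.add continuous_abs) (fun x => (hden x).ne')
    have hφabs : ∀ x, |φ x| = |x| / (1 + |x|) := by
      intro x
      rw [hφ]
      simp only [abs_div]
      rw [abs_of_pos (hden x)]
    have hφlt : ∀ x, |φ x| < 1 := by
      intro x
      rw [hφabs]
      rw [div_lt_one (hden x)]
      linarith [abs_nonneg x]
    have hφinv : ∀ x, φ x / (1 - |φ x|) = x := by
      intro x
      have h1 : 1 - |φ x| = 1 / (1 + |x|) := by
        rw [hφabs]
        field_simp
        ring
      rw [h1, hφ]
      field_simp
    obtain ⟨G', hG'c, hG't⟩ := bounded_case (fun b => φ (f b))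
      (fun b => ⟨le_of_lt (neg_lt_of_abs_lt (hφlt (f b))), le_of_lt (lt_of_abs_lt (hφlt (f b)))⟩)
      (fun n b => φ (g n b)) (fun n => hφc.comp (hg n))
      (fun b => (hφc.tendsto (f b)).comp (hfg b))
    -- clamp into (-1,1) then invert
    set c : ℕ → ℝ := fun k => 1 - 1/(k+2 : ℝ) with hc
    have hc0 : ∀ k, 0 ≤ c k := by
      intro k
      have h1 : 1/(k+2:ℝ) ≤ 1 := by
        rw [div_le_one (by positivity)]
        linarith [Nat.cast_nonneg (α := ℝ) k]
      simp only [hc]; linarith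
    set y : ℕ → B' → ℝ := fun k x => clampR (c k) (G' k x) with hy
    have hyc : ∀ k, Continuous (y k) :=
      fun k => (clampR_continuous (c k)).comp (hG'c k)
    have hyabs : ∀ k x, |y k x| ≤ c k := fun k x => clampR_abs_le (hc0 k)
    have hyden : ∀ k x, (0:ℝ) < 1 - |y k x| := by
      intro k x
      have := hyabs k x
      have h2 : c k < 1 := by
        simp only [hc]
        have : (0:ℝ) < 1/(k+2:ℝ) := by positivity
        linarith
      linarith
    refine ⟨fun k x => y k x / (1 - |y k x|), ?_, ?_⟩
    · intro k
      exact (hyc k).div (continuous_const.sub (hyc k).abs) (fun x => (hyden k x).ne')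
    · intro b
      -- y k ↑b → φ (f b)
      have hct : Tendsto c atTop (𝓝 1) := by
        have h2 : Tendsto (fun k : ℕ => 1/(k+2:ℝ)) atTop (𝓝 0) := by
          have h0 := tendsto_one_div_add_atTop_nhds_zero_nat (𝕜 := ℝ)
          have h3 := h0.comp (tendsto_add_atTop_nat 1)
          have : (fun k : ℕ => 1/(k+2:ℝ)) = (fun n : ℕ => 1/((n:ℝ)+1)) ∘ (fun a => a + 1) := by
            funext k; simp [Function.comp]; push_cast; ring_nf
          rw [this]
          exact h3
        have h4 := (tendsto_const_nhds (x := (1:ℝ))).sub h2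
        simp only [hc]
        simpa using h4
      have hyt : Tendsto (fun k => y k ↑b) atTop (𝓝 (φ (f b))) := by
        rw [Metric.tendsto_atTop]
        intro ε hε
        have h1 : ∀ᶠ k in atTop, |f b|/(1 + |f b|) ≤ c k := by
          have hlt : |φ (f b)| < 1 := hφlt (f b)
          rw [hφabs] at hlt
          exact hct.eventually (eventually_ge_nhds (by linarith))
        have h2 := Metric.tendsto_atTop.mp (hG't b) ε hε
        obtain ⟨N1, hN1⟩ := h2
        obtain ⟨N2, hN2⟩ := eventually_atTop.mp h1
        refine ⟨max N1 N2, fun k hk => ?_⟩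
        have hk1 : N1 ≤ k := le_trans (le_max_left _ _) hk
        have hk2 : N2 ≤ k := le_trans (le_max_right _ _) hk
        rw [Real.dist_eq]
        have hG'k := hN1 k hk1
        rw [Real.dist_eq] at hG'k
        have hφin : |φ (f b)| ≤ c k := by rw [hφabs]; exact hN2 k hk2
        have hle : |y k ↑b - φ (f b)| ≤ |G' k ↑b - φ (f b)| := by
          simp only [hy]
          calc |clampR (c k) (G' k ↑b) - φ (f b)|
              = |clampR (c k) (G' k ↑b) - clampR (c k) (φ (f b))| := by
                rw [clampR_eq_self hφin]
            _ ≤ |G' k ↑b - φ (f b)| := clampR_lipschitz _ _ _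
        exact lt_of_le_of_lt hle hG'k
      have habs : Tendsto (fun k => 1 - |y k ↑b|) atTop (𝓝 (1 - |φ (f b)|)) :=
        tendsto_const_nhds.sub hyt.abs
      have hne : (1 - |φ (f b)|) ≠ 0 := ne_of_gt (by linarith [hφlt (f b)])
      have hdiv := hyt.div habs hne
      rw [hφinv (f b)] at hdiv
      exact hdiv
  · rintro ⟨G, hGc, hGt⟩
    exact ⟨fun n b => G n ↑b, fun n => (hGc n).comp continuous_subtype_val, hGt⟩
end

section
/- Every ℤ-valued Baire-1 function on a metric space is, when regarded as ℝ-valued, a pointwise limit of a sequence of Lipschitz real-valued functions. -/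
open Filter Topology Set

section Aux

variable {α : Type*} [PseudoMetricSpace α]

private lemma lip_mul_bdd {f g : α → ℝ} {K K' : NNReal}
    (hf : LipschitzWith K f) (hg : LipschitzWith K' g)
    (hfb : ∀ x, |f x| ≤ 1) (hgb : ∀ x, |g x| ≤ 1) :
    LipschitzWith (K + K') fun x => f x * g x := by
  apply LipschitzWith.of_dist_le_mul
  intro x y
  have hfd := hf.dist_le_mul x y
  have hgd := hg.dist_le_mul x y
  rw [Real.dist_eq] at hfd hgd ⊢
  push_cast
  have h1 : f x * g x - f y * g y = f x * (g x - g y) + g y * (f x - f y) := by ring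
  calc |f x * g x - f y * g y| = |f x * (g x - g y) + g y * (f x - f y)| := by rw [h1]
    _ ≤ |f x * (g x - g y)| + |g y * (f x - f y)| := abs_add_le _ _
    _ = |f x| * |g x - g y| + |g y| * |f x - f y| := by rw [abs_mul, abs_mul]
    _ ≤ 1 * ((K' : ℝ) * dist x y) + 1 * ((K : ℝ) * dist x y) := by
        gcongr
        · exact hfb x
        · exact hgb y
    _ = ((K : ℝ) + (K' : ℝ)) * dist x y := by ring

open scoped Classical in
noncomputable def phiA (C : Set α) (n : ℕ) (x : α) : ℝ :=
  if C.Nonempty then max 0 (1 - (n : ℝ) * Metric.infDist x C) else 0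

lemma phiA_nonneg (C : Set α) (n : ℕ) (x : α) : 0 ≤ phiA C n x := by
  unfold phiA; split
  · exact le_max_left _ _
  · exact le_refl _

lemma phiA_le_one (C : Set α) (n : ℕ) (x : α) : phiA C n x ≤ 1 := by
  unfold phiA; split
  · apply max_le (by norm_num)
    have : (0 : ℝ) ≤ (n : ℝ) * Metric.infDist x C :=
      mul_nonneg (by positivity) Metric.infDist_nonneg
    linarith
  · norm_num

lemma phiA_lip (C : Set α) (n : ℕ) : LipschitzWith n (phiA C n) := by
  unfold phiA; split
  · apply LipschitzWith.of_dist_le_mul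
    intro x y
    rw [Real.dist_eq]
    have h1 : |max 0 (1 - (n : ℝ) * Metric.infDist x C)
        - max 0 (1 - (n : ℝ) * Metric.infDist y C)|
        ≤ |(1 - (n : ℝ) * Metric.infDist x C) - (1 - (n : ℝ) * Metric.infDist y C)| := by
      simpa [max_comm] using
        abs_max_sub_max_le_abs (1 - (n : ℝ) * Metric.infDist x C)
          (1 - (n : ℝ) * Metric.infDist y C) 0
    have h2 : |(1 - (n : ℝ) * Metric.infDist x C) - (1 - (n : ℝ) * Metric.infDist y C)|
        = (n : ℝ) * |Metric.infDist x C - Metric.infDist y C| := by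
      rw [show (1 - (n : ℝ) * Metric.infDist x C) - (1 - (n : ℝ) * Metric.infDist y C)
          = (n : ℝ) * (Metric.infDist y C - Metric.infDist x C) by ring,
        abs_mul, abs_of_nonneg (by positivity : (0:ℝ) ≤ (n:ℝ)), abs_sub_comm]
    have h3 : |Metric.infDist x C - Metric.infDist y C| ≤ dist x y := by
      rw [abs_sub_le_iff]
      constructor
      · linarith [Metric.infDist_le_infDist_add_dist (x := x) (y := y) (s := C)]
      · have := Metric.infDist_le_infDist_add_dist (x := y) (y := x) (s := C)
        rw [dist_comm y x] at this
        linarith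
    calc |max 0 (1 - (n : ℝ) * Metric.infDist x C)
          - max 0 (1 - (n : ℝ) * Metric.infDist y C)|
        ≤ (n : ℝ) * |Metric.infDist x C - Metric.infDist y C| := by rw [← h2] at *; exact h1
      _ ≤ (n : ℝ) * dist x y := by
          have : (0:ℝ) ≤ (n:ℝ) := by positivity
          exact mul_le_mul_of_nonneg_left h3 this
      _ = ((n : NNReal) : ℝ) * dist x y := by norm_num
  · exact LipschitzWith.const' 0

lemma phiA_of_mem {C : Set α} {x : α} (hx : x ∈ C) (n : ℕ) : phiA C n x = 1 := by
  unfold phiA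
  rw [if_pos ⟨x, hx⟩, Metric.infDist_zero_of_mem hx]
  norm_num

lemma phiA_eventually {C : Set α} {x : α} (hC : IsClosed C) (hx : x ∉ C) :
    ∀ᶠ n : ℕ in atTop, phiA C n x = 0 := by
  by_cases hne : C.Nonempty
  · have hpos : 0 < Metric.infDist x C := (hC.notMem_iff_infDist_pos hne).mp hx
    obtain ⟨N, hN⟩ := exists_nat_ge (1 / Metric.infDist x C)
    filter_upwards [eventually_ge_atTop N] with n hn
    have h1 : (1 / Metric.infDist x C) ≤ (n : ℝ) := hN.trans (by exact_mod_cast hn)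
    have h2 : 1 ≤ (n : ℝ) * Metric.infDist x C := by
      rw [div_le_iff₀ hpos] at h1; linarith
    unfold phiA
    rw [if_pos hne]
    exact max_eq_left (by linarith)
  · filter_upwards with n
    unfold phiA
    rw [if_neg hne]

end Aux

/-- Every `ℤ`-valued Baire-1 function on a metric space (preimages of open sets are Fσ)
is, as an `ℝ`-valued function, a pointwise limit of a sequence of Lipschitz functions. -/
theorem int_valued_baire_one_is_pointwise_limit_of_lipschitz
    {B : Type*} [MetricSpace B] (f : B → ℤ)
    (h : ∀ U : Set ℝ, IsOpen U → ∃ F : ℕ → Set B, (∀ n, IsClosed (F n)) ∧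
      (fun b => (f b : ℝ)) ⁻¹' U = ⋃ n, F n) :
    ∃ g : ℕ → B → ℝ, (∀ n, ∃ K : NNReal, LipschitzWith K (g n)) ∧
      ∀ b : B, Tendsto (fun n => g n b) atTop (nhds ((f b : ℝ))) := by
  classical
  choose F hFc hFU using fun k : ℤ => h (Metric.ball (k : ℝ) (1/2)) Metric.isOpen_ball
  have hmem : ∀ (k : ℤ) (b : B), b ∈ ⋃ n, F k n ↔ f b = k := by
    intro k b
    rw [← hFU k]
    simp only [Set.mem_preimage, Metric.mem_ball]
    constructor
    · intro hb
      rw [Real.dist_eq, ← Int.cast_sub, ← Int.cast_abs] at hb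
      have h1 : ((|f b - k| : ℤ) : ℝ) < 1 := lt_trans hb (by norm_num)
      have h2 : |f b - k| < 1 := by exact_mod_cast h1
      have h3 : f b - k = 0 := Int.abs_lt_one_iff.mp h2
      omega
    · intro hb
      rw [hb]
      simp
  let e : ℕ ≃ ℤ × ℕ := (Denumerable.eqv (ℤ × ℕ)).symm
  let C : ℕ → Set B := fun i => F (e i).1 (e i).2
  let L : ℕ → ℤ := fun i => (e i).1
  have hCc : ∀ i, IsClosed (C i) := fun i => hFc _ _
  have hCf : ∀ i b, b ∈ C i → f b = L i := fun i b hb =>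
    (hmem _ b).mp (Set.mem_iUnion.mpr ⟨_, hb⟩)
  have hCex : ∀ b, ∃ i, b ∈ C i := by
    intro b
    obtain ⟨j, hj⟩ := Set.mem_iUnion.mp ((hmem (f b) b).mpr rfl)
    refine ⟨e.symm (f b, j), ?_⟩
    show b ∈ F (e (e.symm (f b, j))).1 (e (e.symm (f b, j))).2
    rw [Equiv.apply_symm_apply]
    exact hj
  refine ⟨fun n x => ∑ i ∈ Finset.range n,
      (L i : ℝ) * (phiA (C i) n x * ∏ j ∈ Finset.range i, (1 - phiA (C j) n x)), ?_, ?_⟩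
  · -- Lipschitz
    intro n
    have hprod : ∀ i : ℕ, ∃ K : NNReal,
        LipschitzWith K (fun x => ∏ j ∈ Finset.range i, (1 - phiA (C j) n x)) ∧
        ∀ x, |∏ j ∈ Finset.range i, (1 - phiA (C j) n x)| ≤ 1 := by
      intro i
      induction i with
      | zero => exact ⟨0, by simpa using LipschitzWith.const (1 : ℝ), by simp⟩
      | succ i ih =>
        obtain ⟨K, hK, hKb⟩ := ih
        have h1 : LipschitzWith (0 + (n : NNReal)) (fun x => 1 - phiA (C i) n x) :=
          (LipschitzWith.const (1 : ℝ)).sub (phiA_lip (C i) n)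
        have h1b : ∀ x, |1 - phiA (C i) n x| ≤ 1 := fun x =>
          abs_le.mpr ⟨by linarith [phiA_le_one (C i) n x], by linarith [phiA_nonneg (C i) n x]⟩
        refine ⟨K + (0 + (n : NNReal)), ?_, ?_⟩
        · have := lip_mul_bdd hK h1 hKb h1b
          simpa only [Finset.prod_range_succ] using this
        · intro x
          rw [Finset.prod_range_succ, abs_mul]
          calc |∏ j ∈ Finset.range i, (1 - phiA (C j) n x)| * |1 - phiA (C i) n x|
              ≤ 1 * 1 := mul_le_mul (hKb x) (h1b x) (abs_nonneg _) zero_le_one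
            _ = 1 := one_mul 1
    have hterm : ∀ i : ℕ, ∃ K : NNReal, LipschitzWith K
        (fun x => (L i : ℝ) * (phiA (C i) n x * ∏ j ∈ Finset.range i, (1 - phiA (C j) n x))) := by
      intro i
      obtain ⟨K, hK, hKb⟩ := hprod i
      have hphi_b : ∀ x, |phiA (C i) n x| ≤ 1 := fun x =>
        abs_le.mpr ⟨by linarith [phiA_nonneg (C i) n x], phiA_le_one (C i) n x⟩
      have h2 : LipschitzWith (n + K) (fun x => phiA (C i) n x *
          ∏ j ∈ Finset.range i, (1 - phiA (C j) n x)) :=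
        lip_mul_bdd (phiA_lip (C i) n) hK hphi_b hKb
      refine ⟨‖(L i : ℝ)‖₊ * (n + K), ?_⟩
      have h3 := (lipschitzWith_smul (β := ℝ) ((L i : ℝ))).comp h2
      simpa [Function.comp_def, smul_eq_mul, mul_assoc] using h3
    have : ∀ s : Finset ℕ, ∃ K : NNReal, LipschitzWith K (fun x => ∑ i ∈ s,
        (L i : ℝ) * (phiA (C i) n x * ∏ j ∈ Finset.range i, (1 - phiA (C j) n x))) := by
      intro s
      induction s using Finset.induction with
      | empty => exact ⟨0, by simpa using LipschitzWith.const (0 : ℝ)⟩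
      | insert _ _ hnotmem ih =>
        obtain ⟨K, hK⟩ := ih
        obtain ⟨K', hK'⟩ := hterm _
        refine ⟨K' + K, ?_⟩
        have := hK'.add hK
        simpa only [Finset.sum_insert hnotmem] using this
    exact this (Finset.range n)
  · -- pointwise convergence
    intro b
    have hex := hCex b
    set i0 := Nat.find hex with hi0def
    have hi0 : b ∈ C i0 := Nat.find_spec hex
    have hltm : ∀ j < i0, b ∉ C j := fun j hj => Nat.find_min hex hj
    have hL : (L i0 : ℝ) = (f b : ℝ) := by exact_mod_cast (hCf i0 b hi0).symm
    have h1 : ∀ j ∈ Finset.range i0, ∀ᶠ n : ℕ in atTop, phiA (C j) n b = 0 := fun j hj =>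
      phiA_eventually (hCc j) (hltm j (Finset.mem_range.mp hj))
    have h2 : ∀ᶠ n : ℕ in atTop, ∀ j ∈ Finset.range i0, phiA (C j) n b = 0 :=
      (eventually_all_finset _).mpr h1
    have hev : (fun n : ℕ => ∑ i ∈ Finset.range n,
        (L i : ℝ) * (phiA (C i) n b * ∏ j ∈ Finset.range i, (1 - phiA (C j) n b)))
        =ᶠ[atTop] fun _ => (f b : ℝ) := by
      filter_upwards [h2, eventually_gt_atTop i0] with n hn hni
      rw [Finset.sum_eq_single_of_mem i0 (Finset.mem_range.mpr hni)]
      · rw [phiA_of_mem hi0, Finset.prod_eq_one (fun j hj => by rw [hn j hj]; ring), hL]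
        ring
      · intro i hi hne
        rcases lt_or_gt_of_ne hne with hlt' | hgt
        · rw [hn i (Finset.mem_range.mpr hlt')]; ring
        · have hz : (∏ j ∈ Finset.range i, (1 - phiA (C j) n b)) = 0 :=
            Finset.prod_eq_zero (Finset.mem_range.mpr hgt) (by rw [phiA_of_mem hi0]; ring)
          rw [hz]; ring
    exact Tendsto.congr' hev.symm tendsto_const_nhds
end

section
/- For a metric space (B,d) and f : B → ℝ, the following are equivalent: (i) f is a pointwise limit of continuous functions; (ii) for every gauge φ there exists a sequence of continuous functions f_n : B → ℝ such that for all b ∈ B, f_n(b') → f(b) uniformly over b' with d(b,b') ≤ φ(1/n) (i.e., sup_{d(b,b') ≤ φ(1/n)} |f_n(b') − f(b)| → 0 for each fixed b). -/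
open Filter Topology Set Metric

namespace PLAux

variable {B : Type*} [MetricSpace B]

/-- bounded Lipschitz predicate -/
def LB (F : B → ℝ) : Prop :=
  ∃ K C : ℝ, 0 ≤ K ∧ 0 ≤ C ∧ (∀ x, |F x| ≤ C) ∧ ∀ x y, |F x - F y| ≤ K * dist x y

lemma LB_const (c : ℝ) : LB (fun _ : B => c) :=
  ⟨0, |c|, le_refl 0, abs_nonneg c, fun _ => le_refl _, fun x y => by simp⟩

lemma LB.add {F G : B → ℝ} (hF : LB F) (hG : LB G) : LB (fun x => F x + G x) := by
  obtain ⟨K1, C1, hK1, hC1', hC1, h1⟩ := hF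
  obtain ⟨K2, C2, hK2, hC2', hC2, h2⟩ := hG
  refine ⟨K1 + K2, C1 + C2, by positivity, by positivity, fun x => ?_, fun x y => ?_⟩
  · calc |F x + G x| ≤ |F x| + |G x| := abs_add_le _ _
      _ ≤ C1 + C2 := add_le_add (hC1 x) (hC2 x)
  · calc |F x + G x - (F y + G y)| = |F x - F y + (G x - G y)| := by ring_nf
      _ ≤ |F x - F y| + |G x - G y| := abs_add_le _ _
      _ ≤ K1 * dist x y + K2 * dist x y := add_le_add (h1 x y) (h2 x y)
      _ = (K1 + K2) * dist x y := by ring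

lemma LB.mul {F G : B → ℝ} (hF : LB F) (hG : LB G) : LB (fun x => F x * G x) := by
  obtain ⟨K1, C1, hK1, hC1', hC1, h1⟩ := hF
  obtain ⟨K2, C2, hK2, hC2', hC2, h2⟩ := hG
  refine ⟨C1 * K2 + C2 * K1, C1 * C2, by positivity, by positivity, fun x => ?_, fun x y => ?_⟩
  · rw [abs_mul]
    exact mul_le_mul (hC1 x) (hC2 x) (abs_nonneg _) hC1'
  · have : F x * G x - F y * G y = F x * (G x - G y) + G y * (F x - F y) := by ring
    rw [this]
    calc |F x * (G x - G y) + G y * (F x - F y)|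
        ≤ |F x * (G x - G y)| + |G y * (F x - F y)| := abs_add_le _ _
      _ = |F x| * |G x - G y| + |G y| * |F x - F y| := by rw [abs_mul, abs_mul]
      _ ≤ C1 * (K2 * dist x y) + C2 * (K1 * dist x y) := by
          apply add_le_add
          · exact mul_le_mul (hC1 x) (h2 x y) (abs_nonneg _) hC1'
          · exact mul_le_mul (hC2 y) (h1 x y) (abs_nonneg _) hC2'
      _ = (C1 * K2 + C2 * K1) * dist x y := by ring

lemma LB.neg {F : B → ℝ} (hF : LB F) : LB (fun x => -F x) := by
  obtain ⟨K, C, hK, hC', hC, h⟩ := hF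
  exact ⟨K, C, hK, hC', fun x => by rw [abs_neg]; exact hC x,
    fun x y => by rw [show -F x - -F y = -(F x - F y) by ring, abs_neg]; exact h x y⟩

lemma LB.sub {F G : B → ℝ} (hF : LB F) (hG : LB G) : LB (fun x => F x - G x) := by
  have := hF.add hG.neg
  simpa [sub_eq_add_neg] using this

lemma LBmax {F G : B → ℝ} (hF : LB F) (hG : LB G) : LB (fun x => max (F x) (G x)) := by
  obtain ⟨K1, C1, hK1, hC1', hC1, h1⟩ := hF
  obtain ⟨K2, C2, hK2, hC2', hC2, h2⟩ := hG
  refine ⟨K1 + K2, C1 + C2, by positivity, by positivity, fun x => ?_, fun x y => ?_⟩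
  · show |max (F x) (G x)| ≤ C1 + C2
    rcases max_cases (F x) (G x) with ⟨he, _⟩ | ⟨he, _⟩ <;> rw [he]
    · exact le_trans (hC1 x) (by linarith)
    · exact le_trans (hC2 x) (by linarith)
  · show |max (F x) (G x) - max (F y) (G y)| ≤ (K1 + K2) * dist x y
    calc |max (F x) (G x) - max (F y) (G y)| ≤ Max.max |F x - F y| |G x - G y| :=
        abs_max_sub_max_le_max _ _ _ _
      _ ≤ (K1 + K2) * dist x y := by
        apply max_le
        · exact le_trans (h1 x y) (by nlinarith [dist_nonneg (x := x) (y := y)])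
        · exact le_trans (h2 x y) (by nlinarith [dist_nonneg (x := x) (y := y)])

lemma LBmin {F G : B → ℝ} (hF : LB F) (hG : LB G) : LB (fun x => min (F x) (G x)) := by
  have := (LBmax hF.neg hG.neg).neg
  simpa [max_neg_neg] using this

lemma LB_sum {ι : Type*} (s : Finset ι) (F : ι → B → ℝ) (h : ∀ i ∈ s, LB (F i)) :
    LB (fun x => ∑ i ∈ s, F i x) := by
  classical
  induction s using Finset.induction with
  | empty => simpa using LB_const 0
  | insert a s hni ih =>
    simp only [Finset.sum_insert hni]
    exact (h a (Finset.mem_insert_self a s)).add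
      (ih (fun i hi => h i (Finset.mem_insert_of_mem hi)))

lemma LB_prod {ι : Type*} (s : Finset ι) (F : ι → B → ℝ) (h : ∀ i ∈ s, LB (F i)) :
    LB (fun x => ∏ i ∈ s, F i x) := by
  classical
  induction s using Finset.induction with
  | empty => simpa using LB_const 1
  | insert a s hni ih =>
    simp only [Finset.prod_insert hni]
    exact (h a (Finset.mem_insert_self a s)).mul
      (ih (fun i hi => h i (Finset.mem_insert_of_mem hi)))

lemma LB.continuous {F : B → ℝ} (hF : LB F) : Continuous F := by
  obtain ⟨K, C, hK, _, hC, h⟩ := hF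
  have : LipschitzWith (Real.toNNReal K) F := by
    apply LipschitzWith.of_dist_le_mul
    intro x y
    rw [Real.dist_eq, Real.coe_toNNReal K hK]
    exact h x y
  exact this.continuous

set_option linter.unusedSectionVars false

noncomputable def em (i : ℕ) : ℕ × ℤ := (Denumerable.eqv (ℕ × ℤ)).symm i

lemma em_surj : Function.Surjective (em) := (Denumerable.eqv (ℕ × ℤ)).symm.surjective

/-- the closed "settled" sets -/
def ES (g : ℕ → B → ℝ) (m i : ℕ) : Set B :=
  {x | (∀ a, (em i).1 ≤ a → ∀ b, (em i).1 ≤ b → |g a x - g b x| ≤ (1/2:ℝ)^m) ∧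
    |g (em i).1 x - ((em i).2 : ℝ) * (1/2)^m| ≤ (1/2)^m}

noncomputable def cv (m i : ℕ) : ℝ := ((em i).2 : ℝ) * (1/2)^m

lemma ES_closed (g : ℕ → B → ℝ) (hg : ∀ n, Continuous (g n)) (m i : ℕ) :
    IsClosed (ES g m i) := by
  have h1 : IsClosed {x : B | ∀ a, (em i).1 ≤ a → ∀ b, (em i).1 ≤ b →
      |g a x - g b x| ≤ (1/2:ℝ)^m} := by
    have : {x : B | ∀ a, (em i).1 ≤ a → ∀ b, (em i).1 ≤ b → |g a x - g b x| ≤ (1/2:ℝ)^m}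
        = ⋂ a, ⋂ b, {x : B | (em i).1 ≤ a → (em i).1 ≤ b → |g a x - g b x| ≤ (1/2:ℝ)^m} := by
      ext x; simp only [Set.mem_iInter, Set.mem_setOf_eq]; tauto
    rw [this]
    refine isClosed_iInter fun a => isClosed_iInter fun b => ?_
    by_cases ha : (em i).1 ≤ a
    · by_cases hb : (em i).1 ≤ b
      · simp only [ha, hb, forall_true_left]
        exact isClosed_le (continuous_abs.comp ((hg a).sub (hg b))) continuous_const
      · simp only [hb]
        convert isClosed_univ using 1
        ext x; simp [hb]
    · convert isClosed_univ using 1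
      ext x; simp [ha]
  have h2 : IsClosed {x : B | |g (em i).1 x - ((em i).2 : ℝ) * (1/2)^m| ≤ (1/2:ℝ)^m} :=
    isClosed_le (continuous_abs.comp ((hg _).sub continuous_const)) continuous_const
  exact h1.inter h2

lemma ES_cover (g : ℕ → B → ℝ) {x : B} {L : ℝ}
    (hx : Tendsto (fun n => g n x) atTop (nhds L)) (m : ℕ) : ∃ i, x ∈ ES g m i := by
  have hε : (0:ℝ) < (1/2)^m := by positivity
  obtain ⟨N, hN⟩ := (Metric.tendsto_atTop).1 hx ((1/2)^m / 2) (by positivity)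
  set q : ℤ := ⌊g N x / ((1/2:ℝ)^m)⌋ with hq
  obtain ⟨i, hi⟩ := em_surj (N, q)
  refine ⟨i, ?_⟩
  rw [ES]
  simp only [hi, Set.mem_setOf_eq]
  constructor
  · intro a ha b hb
    have h1 := hN a ha
    have h2 := hN b hb
    rw [Real.dist_eq] at h1 h2
    calc |g a x - g b x| = |(g a x - L) + -(g b x - L)| := by ring_nf
      _ ≤ |g a x - L| + |g b x - L| := by
          refine le_trans (abs_add_le _ _) ?_
          rw [abs_neg]
      _ ≤ (1/2)^m := by linarith
  · have h0 : (0:ℝ) ≤ g N x / ((1/2:ℝ)^m) - (q:ℝ) := by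
      have := Int.floor_le (g N x / ((1/2:ℝ)^m)); linarith
    have h1 : g N x / ((1/2:ℝ)^m) - (q:ℝ) < 1 := by
      have := Int.lt_floor_add_one (g N x / ((1/2:ℝ)^m)); linarith
    have key : g N x - (q:ℝ) * (1/2)^m = (g N x / ((1/2:ℝ)^m) - (q:ℝ)) * (1/2)^m := by
      field_simp
    rw [key, abs_of_nonneg (by positivity)]
    nlinarith

lemma mem_ES_val (g : ℕ → B → ℝ) {x : B} {L : ℝ}
    (hx : Tendsto (fun n => g n x) atTop (nhds L)) {m i : ℕ} (hmem : x ∈ ES g m i) :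
    |L - cv m i| ≤ 2 * (1/2)^m := by
  obtain ⟨h1, h2⟩ := hmem
  have hfN : |L - g (em i).1 x| ≤ (1/2)^m := by
    have ht : Tendsto (fun a => |g a x - g (em i).1 x|) atTop
        (nhds (|L - g (em i).1 x|)) := by
      exact (continuous_abs.tendsto _).comp ((hx.sub tendsto_const_nhds))
    refine le_of_tendsto ht ?_
    filter_upwards [eventually_ge_atTop (em i).1] with a ha
    exact h1 a ha _ (le_refl _)
  calc |L - cv m i| = |(L - g (em i).1 x) + (g (em i).1 x - cv m i)| := by ring_nf
    _ ≤ |L - g (em i).1 x| + |g (em i).1 x - cv m i| := abs_add_le _ _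
    _ ≤ (1/2)^m + (1/2)^m := add_le_add hfN h2
    _ = 2 * (1/2)^m := by ring

open scoped Classical in
noncomputable def th (g : ℕ → B → ℝ) (m k i : ℕ) (x : B) : ℝ :=
  if (ES g m i).Nonempty then max 0 (1 - (k+1) * Metric.infDist x (ES g m i)) else 0

lemma th_nonneg (g : ℕ → B → ℝ) (m k i : ℕ) (x : B) : 0 ≤ th g m k i x := by
  rw [th]; split
  · exact le_max_left _ _
  · exact le_refl 0

lemma th_le_one (g : ℕ → B → ℝ) (m k i : ℕ) (x : B) : th g m k i x ≤ 1 := by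
  rw [th]; split
  · apply max_le (by norm_num)
    have := Metric.infDist_nonneg (x := x) (s := ES g m i)
    nlinarith [Nat.cast_nonneg (α := ℝ) k]
  · norm_num

lemma LB_th (g : ℕ → B → ℝ) (m k i : ℕ) : LB (th g m k i) := by
  refine ⟨(k+1 : ℝ), 1, by positivity, by norm_num, fun x => ?_, fun x y => ?_⟩
  · rw [abs_le]
    exact ⟨by linarith [th_nonneg g m k i x], th_le_one g m k i x⟩
  · rw [th, th]
    split
    · have hle : |max 0 (1 - (k+1) * Metric.infDist x (ES g m i)) -
          max 0 (1 - (k+1) * Metric.infDist y (ES g m i))| ≤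
          |(1 - (k+1) * Metric.infDist x (ES g m i)) -
            (1 - (k+1) * Metric.infDist y (ES g m i))| := by
        refine le_trans (abs_max_sub_max_le_max _ _ _ _) ?_
        simp
      refine le_trans hle ?_
      have : (1 - (k+1) * Metric.infDist x (ES g m i)) -
          (1 - (k+1) * Metric.infDist y (ES g m i)) =
          (k+1) * (Metric.infDist y (ES g m i) - Metric.infDist x (ES g m i)) := by ring
      rw [this, abs_mul, abs_of_nonneg (by positivity : (0:ℝ) ≤ (k:ℝ)+1)]
      have hd : |Metric.infDist y (ES g m i) - Metric.infDist x (ES g m i)| ≤ dist x y := by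
        rw [abs_sub_le_iff]
        constructor
        · have := Metric.infDist_le_infDist_add_dist (x := y) (y := x) (s := ES g m i)
          rw [dist_comm] at this; linarith
        · have := Metric.infDist_le_infDist_add_dist (x := x) (y := y) (s := ES g m i)
          linarith [dist_comm x y]
      nlinarith [dist_nonneg (x := x) (y := y)]
    · simpa using by positivity

noncomputable def wt (g : ℕ → B → ℝ) (m k i : ℕ) (x : B) : ℝ :=
  th g m k i x * ∏ j ∈ Finset.range i, (1 - th g m k j x)

lemma LB_wt (g : ℕ → B → ℝ) (m k i : ℕ) : LB (wt g m k i) := by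
  refine (LB_th g m k i).mul (LB_prod _ _ fun j _ => ?_)
  exact (LB_const 1).sub (LB_th g m k j)

noncomputable def FF (g : ℕ → B → ℝ) (m k : ℕ) (x : B) : ℝ :=
  ∑ i ∈ Finset.range (k+1), wt g m k i x * cv m i

lemma LB_FF (g : ℕ → B → ℝ) (m k : ℕ) : LB (FF g m k) := by
  refine LB_sum _ _ fun i _ => (LB_wt g m k i).mul (LB_const (cv m i))

noncomputable def DD (g : ℕ → B → ℝ) (m k : ℕ) (x : B) : ℝ :=
  max (-(3*(1/2)^m)) (min (3*(1/2)^m) (FF g (m+1) k x - FF g m k x))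

lemma LB_DD (g : ℕ → B → ℝ) (m k : ℕ) : LB (DD g m k) :=
  LBmax (LB_const _) (LBmin (LB_const _) ((LB_FF g (m+1) k).sub (LB_FF g m k)))

lemma DD_abs_le (g : ℕ → B → ℝ) (m k : ℕ) (x : B) : |DD g m k x| ≤ 3*(1/2)^m := by
  have h3 : (0:ℝ) ≤ 3*(1/2)^m := by positivity
  rw [abs_le, DD]
  constructor
  · exact le_max_left _ _
  · exact max_le (by linarith) (le_trans (min_le_left _ _) (le_refl _))

noncomputable def GG (g : ℕ → B → ℝ) (k : ℕ) (x : B) : ℝ :=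
  FF g 0 k x + ∑ m ∈ Finset.range k, DD g m k x

lemma LB_GG (g : ℕ → B → ℝ) (k : ℕ) : LB (GG g k) :=
  (LB_FF g 0 k).add (LB_sum _ _ fun m _ => LB_DD g m k)



lemma th_eq_one (g : ℕ → B → ℝ) (m k i : ℕ) {x : B} (hx : x ∈ ES g m i) :
    th g m k i x = 1 := by
  rw [th, if_pos ⟨x, hx⟩, Metric.infDist_zero_of_mem hx]
  norm_num

lemma th_far (g : ℕ → B → ℝ) (hg : ∀ n, Continuous (g n)) (m j : ℕ) {x : B}
    (hx : x ∉ ES g m j) :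
    ∃ T : ℕ, ∀ k, T ≤ k → th g m k j x = 0 := by
  by_cases hne : (ES g m j).Nonempty
  · have hd : 0 < Metric.infDist x (ES g m j) :=
      ((ES_closed g hg m j).notMem_iff_infDist_pos hne).1 hx
    refine ⟨Nat.ceil (1 / Metric.infDist x (ES g m j)), fun k hk => ?_⟩
    rw [th, if_pos hne, max_eq_left]
    have h1 : (1:ℝ) / Metric.infDist x (ES g m j) ≤ (k:ℝ) :=
      le_trans (Nat.le_ceil _) (by exact_mod_cast hk)
    have h2 : (1:ℝ) ≤ (k:ℝ) * Metric.infDist x (ES g m j) := by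
      rw [div_le_iff₀ hd] at h1; linarith
    nlinarith [Metric.infDist_nonneg (x := x) (s := ES g m j)]
  · exact ⟨0, fun k _ => by rw [th, if_neg hne]⟩

lemma FF_eventual (g : ℕ → B → ℝ) (hg : ∀ n, Continuous (g n)) {x : B} {L : ℝ}
    (hx : Tendsto (fun n => g n x) atTop (nhds L)) (m : ℕ) :
    ∃ (v : ℝ) (T : ℕ), |L - v| ≤ 2 * (1/2)^m ∧ ∀ k, T ≤ k → FF g m k x = v := by
  have hex : ∃ i, x ∈ ES g m i := ES_cover g hx m
  classical
  set i₀ := Nat.find hex with hi₀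
  have hmem : x ∈ ES g m i₀ := Nat.find_spec hex
  choose Tj hTj using fun (j : ℕ) (h : x ∉ ES g m j) => th_far g hg m j h
  have hnot : ∀ j < i₀, x ∉ ES g m j := fun j hj => Nat.find_min hex hj
  set T := max i₀ (Finset.sup (Finset.range i₀) (fun j =>
    if h : x ∈ ES g m j then 0 else Tj j h)) with hT
  refine ⟨cv m i₀, T, mem_ES_val g hx hmem, fun k hk => ?_⟩
  have hki₀ : i₀ ≤ k := le_trans (le_max_left _ _) hk
  have hth0 : ∀ j < i₀, th g m k j x = 0 := by
    intro j hj
    have hxj := hnot j hj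
    refine hTj j hxj k ?_
    have h1 : (if h : x ∈ ES g m j then 0 else Tj j h) ≤
        Finset.sup (Finset.range i₀) (fun j => if h : x ∈ ES g m j then 0 else Tj j h) :=
      Finset.le_sup (f := fun j => if h : x ∈ ES g m j then 0 else Tj j h)
        (Finset.mem_range.2 hj)
    have h2 : Finset.sup (Finset.range i₀)
        (fun j => if h : x ∈ ES g m j then 0 else Tj j h) ≤ T := le_max_right _ _
    have h3 := le_trans h1 (le_trans h2 hk)
    rwa [dif_neg hxj] at h3
  have hth1 : th g m k i₀ x = 1 := th_eq_one g m k i₀ hmem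
  rw [FF]
  rw [Finset.sum_eq_single_of_mem i₀ (Finset.mem_range.2 (Nat.lt_succ_of_le hki₀))]
  · rw [wt, hth1, Finset.prod_eq_one (fun j hj => by
      rw [hth0 j (Finset.mem_range.1 hj)]; ring)]
    ring
  · intro i _ hne
    rcases lt_or_gt_of_ne hne with hlt | hgt
    · rw [wt, hth0 i hlt, zero_mul, zero_mul]
    · rw [wt, Finset.prod_eq_zero (Finset.mem_range.2 hgt) (by rw [hth1]; ring)]
      ring

lemma GG_tendsto (g : ℕ → B → ℝ) (hg : ∀ n, Continuous (g n)) {x : B} {L : ℝ}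
    (hx : Tendsto (fun n => g n x) atTop (nhds L)) :
    Tendsto (fun k => GG g k x) atTop (nhds L) := by
  choose v T hv hT using fun m => FF_eventual g hg hx m
  rw [Metric.tendsto_atTop]
  intro η hη
  obtain ⟨M, hM⟩ : ∃ M : ℕ, (1/2:ℝ)^M < η/8 := by
    obtain ⟨M, hM⟩ := exists_pow_lt_of_lt_one (show (0:ℝ) < η/8 by linarith)
      (by norm_num : (1/2:ℝ) < 1)
    exact ⟨M, hM⟩
  refine ⟨max (M+1) (Finset.sup (Finset.range (M+2)) T), fun k hk => ?_⟩
  have hkM : M + 1 ≤ k := le_trans (le_max_left _ _) hk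
  have hFFv : ∀ m, m ≤ M + 1 → FF g m k x = v m := by
    intro m hm
    refine hT m k ?_
    exact le_trans (Finset.le_sup (Finset.mem_range.2 (Nat.lt_succ_of_le hm)))
      (le_trans (le_max_right _ _) hk)
  have hDD : ∀ m, m < M → DD g m k x = v (m+1) - v m := by
    intro m hm
    have h1 : FF g (m+1) k x = v (m+1) := hFFv (m+1) (by omega)
    have h2 : FF g m k x = v m := hFFv m (by omega)
    have hbd : |v (m+1) - v m| ≤ 3 * (1/2)^m := by
      have a1 := hv (m+1)
      have a2 := hv m
      have : v (m+1) - v m = -(L - v (m+1)) + (L - v m) := by ring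
      rw [this]
      refine le_trans (abs_add_le _ _) ?_
      rw [abs_neg]
      have : (2:ℝ) * (1/2)^(m+1) + 2 * (1/2)^m = 3 * (1/2)^m := by ring
      linarith [a1, a2]
    rw [DD, h1, h2]
    rw [abs_le] at hbd
    rw [min_eq_right hbd.2, max_eq_right hbd.1]
  have hsplit : ∑ m ∈ Finset.range k, DD g m k x =
      ∑ m ∈ Finset.range M, DD g m k x + ∑ m ∈ Finset.Ico M k, DD g m k x := by
    rw [Finset.range_eq_Ico, Finset.range_eq_Ico]
    exact (Finset.sum_Ico_consecutive (fun m => DD g m k x) (Nat.zero_le M) (show M ≤ k by omega)).symm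
  have htel : ∑ m ∈ Finset.range M, DD g m k x = v M - v 0 := by
    rw [Finset.sum_congr rfl (fun m hm => hDD m (Finset.mem_range.1 hm))]
    exact Finset.sum_range_sub v M
  have hR : |∑ m ∈ Finset.Ico M k, DD g m k x| ≤ 6 * (1/2)^M := by
    refine le_trans (Finset.abs_sum_le_sum_abs _ _) ?_
    have h1 : ∑ m ∈ Finset.Ico M k, |DD g m k x| ≤ ∑ m ∈ Finset.Ico M k, 3 * (1/2:ℝ)^m :=
      Finset.sum_le_sum fun m _ => DD_abs_le g m k x
    have h2 : ∑ m ∈ Finset.Ico M k, 3 * (1/2:ℝ)^m = 3 * ∑ m ∈ Finset.Ico M k, (1/2:ℝ)^m := by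
      rw [Finset.mul_sum]
    have h3 : ∑ m ∈ Finset.Ico M k, (1/2:ℝ)^m ≤ 2 * (1/2)^M := by
      rw [Finset.sum_Ico_eq_sum_range]
      have : ∀ i, (1/2:ℝ)^(M+i) = (1/2)^M * (1/2)^i := fun i => pow_add _ _ _
      rw [Finset.sum_congr rfl (fun i _ => this i), ← Finset.mul_sum]
      have := sum_geometric_two_le (k - M)
      nlinarith [pow_pos (show (0:ℝ) < 1/2 by norm_num) M]
    linarith
  have hGG : GG g k x = v M + ∑ m ∈ Finset.Ico M k, DD g m k x := by
    rw [GG, hsplit, htel, hFFv 0 (by omega)]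
    ring
  rw [Real.dist_eq, hGG]
  have hvM := hv M
  have : |v M + ∑ m ∈ Finset.Ico M k, DD g m k x - L| ≤
      |L - v M| + |∑ m ∈ Finset.Ico M k, DD g m k x| := by
    have : v M + ∑ m ∈ Finset.Ico M k, DD g m k x - L =
        -(L - v M) + ∑ m ∈ Finset.Ico M k, DD g m k x := by ring
    rw [this]
    refine le_trans (abs_add_le _ _) (by rw [abs_neg])
  have hfin : |L - v M| + |∑ m ∈ Finset.Ico M k, DD g m k x| ≤ 8 * (1/2)^M := by
    linarith
  calc |v M + ∑ m ∈ Finset.Ico M k, DD g m k x - L| ≤ 8 * (1/2)^M := le_trans this hfin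
    _ < η := by linarith

/-- Main auxiliary lemma: a pointwise limit of continuous functions is a pointwise
limit of (bounded) Lipschitz functions with explicit constants. -/
lemma exists_lipschitz_seq (f : B → ℝ) (g : ℕ → B → ℝ) (hg : ∀ n, Continuous (g n))
    (hlim : ∀ b : B, Tendsto (fun n => g n b) atTop (nhds (f b))) :
    ∃ (F : ℕ → B → ℝ) (K : ℕ → ℝ), (∀ n, 0 ≤ K n) ∧
      (∀ n, Continuous (F n)) ∧
      (∀ n x y, |F n x - F n y| ≤ K n * dist x y) ∧
      (∀ b : B, Tendsto (fun n => F n b) atTop (nhds (f b))) := by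
  have hLB := fun k => LB_GG g k
  choose K C hK hC hbd hlip using fun k => LB_GG g k
  exact ⟨GG g, K, hK, fun n => (hLB n).continuous, hlip,
    fun b => GG_tendsto g hg (hlim b)⟩

end PLAux

/-- `f : B → ℝ` is a pointwise limit of continuous functions iff for every gauge `φ`
there is a sequence of continuous functions `f n` φ-converging to `f` uniformly over the
balls `dist b b' ≤ φ (1/n)`. -/
theorem pointwise_limit_iff_phi_convergence_for_all_gauges
    {B : Type*} [MetricSpace B] (f : B → ℝ) :
    (∃ g : ℕ → B → ℝ, (∀ n, Continuous (g n)) ∧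
      ∀ b : B, Tendsto (fun n => g n b) atTop (nhds (f b))) ↔
    (∀ (φ : ℝ → ℝ) (ε : ℝ), 0 < ε → ContinuousOn φ (Set.Ico 0 ε) → φ 0 = 0 →
      (∀ x ∈ Set.Ico 0 ε, 0 ≤ φ x) →
      ∃ fseq : ℕ → B → ℝ, (∀ n, Continuous (fseq n)) ∧
        ∀ b : B, ∀ η : ℝ, 0 < η → ∃ N : ℕ, ∀ n : ℕ, N ≤ n →
          ∀ b' : B, dist b b' ≤ φ (1 / n) → |fseq n b' - f b| < η) := by
  constructor
  · rintro ⟨g, hg, hlim⟩ φ ε hε hcont hφ0 hφnn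
    classical
    obtain ⟨F, K, hK, hFcont, hlip, hFlim⟩ := PLAux.exists_lipschitz_seq f g hg hlim
    set r : ℕ → ℝ := fun n => max (φ (1/(n:ℝ))) 0 with hrdef
    have hr0 : ∀ n, 0 ≤ r n := fun n => le_max_right _ _
    have hr : Tendsto r atTop (nhds 0) := by
      have h1 : Tendsto (fun n : ℕ => 1/(n:ℝ)) atTop (nhds 0) :=
        tendsto_one_div_atTop_nhds_zero_nat
      have hlt : ∀ᶠ n : ℕ in atTop, 1/(n:ℝ) < ε := h1.eventually (gt_mem_nhds hε)
      have h2 : Tendsto (fun n : ℕ => 1/(n:ℝ)) atTop (nhdsWithin 0 (Set.Ico 0 ε)) := by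
        rw [tendsto_nhdsWithin_iff]
        refine ⟨h1, ?_⟩
        filter_upwards [hlt] with n hn
        exact ⟨by positivity, hn⟩
      have h3 : Tendsto (fun n : ℕ => φ (1/(n:ℝ))) atTop (nhds 0) := by
        have := (hcont 0 ⟨le_refl 0, hε⟩).tendsto.comp h2
        rwa [hφ0] at this
      have h4 := h3.max (tendsto_const_nhds (x := (0:ℝ)) (f := atTop))
      rw [hrdef]
      simpa only [max_self] using h4
    set kk : ℕ → ℕ := fun n =>
      Nat.findGreatest (fun m => (K m + 1) * r n ≤ 1/((m:ℝ)+1)) n with hkkdef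
    refine ⟨fun n => F (kk n), fun n => hFcont (kk n), ?_⟩
    intro b η hη
    obtain ⟨M₁, hM₁⟩ := Metric.tendsto_atTop.1 (hFlim b) (η/2) (by linarith)
    obtain ⟨M₂, hM₂⟩ := exists_nat_gt (2/η)
    have hM₂' : 1/((M₂:ℝ)+1) < η/2 := by
      rw [div_lt_iff₀ (by positivity)]
      rw [div_lt_iff₀ hη] at hM₂
      nlinarith
    set M := max M₁ M₂ with hMdef
    have hδ : (0:ℝ) < (1/((M:ℝ)+1)) / (K M + 1) := by
      have := hK M
      positivity
    obtain ⟨N₀, hN₀⟩ := Metric.tendsto_atTop.1 hr _ hδ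
    refine ⟨max N₀ M, fun n hn b' hb' => ?_⟩
    have hnN₀ : N₀ ≤ n := le_trans (le_max_left _ _) hn
    have hnM : M ≤ n := le_trans (le_max_right _ _) hn
    have hPM : (K M + 1) * r n ≤ 1/((M:ℝ)+1) := by
      have h5 := hN₀ n hnN₀
      rw [Real.dist_eq, sub_zero, abs_of_nonneg (hr0 n)] at h5
      have hKM : 0 < K M + 1 := by linarith [hK M]
      rw [lt_div_iff₀ hKM] at h5
      nlinarith
    have hkM : M ≤ kk n := Nat.le_findGreatest hnM hPM
    have hP : (K (kk n) + 1) * r n ≤ 1/(((kk n):ℝ)+1) :=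
      Nat.findGreatest_spec (P := fun m => (K m + 1) * r n ≤ 1/((m:ℝ)+1)) hnM hPM
    have hM1 : M₁ ≤ kk n := le_trans (le_max_left _ _) hkM
    have hM2 : M₂ ≤ kk n := le_trans (le_max_right _ _) hkM
    -- second term
    have hsecond : |F (kk n) b - f b| < η/2 := by
      have := hM₁ (kk n) hM1
      rwa [Real.dist_eq] at this
    -- first term
    have hdist : dist b b' ≤ r n := le_trans hb' (le_max_left _ _)
    have hfirst : |F (kk n) b' - F (kk n) b| ≤ 1/(((kk n):ℝ)+1) := by
      have h6 := hlip (kk n) b' b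
      have h7 : K (kk n) * dist b' b ≤ (K (kk n) + 1) * r n := by
        rw [dist_comm b' b]
        nlinarith [hK (kk n), hr0 n, dist_nonneg (x := b) (y := b'), hdist]
      linarith
    have hlast : 1/(((kk n):ℝ)+1) ≤ 1/((M₂:ℝ)+1) := by
      apply one_div_le_one_div_of_le (by positivity)
      have : (M₂:ℝ) ≤ ((kk n):ℝ) := by exact_mod_cast hM2
      linarith
    calc |F (kk n) b' - f b|
        = |(F (kk n) b' - F (kk n) b) + (F (kk n) b - f b)| := by ring_nf
      _ ≤ |F (kk n) b' - F (kk n) b| + |F (kk n) b - f b| := abs_add_le _ _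
      _ < 1/((M₂:ℝ)+1) + η/2 := by
          have := le_trans hfirst hlast
          linarith
      _ < η := by linarith
  · intro h
    obtain ⟨fseq, hcont, hconv⟩ :=
      h (fun _ => 0) 1 one_pos continuousOn_const rfl (fun x _ => le_refl 0)
    refine ⟨fseq, hcont, fun b => ?_⟩
    rw [Metric.tendsto_atTop]
    intro η hη
    obtain ⟨N, hN⟩ := hconv b η hη
    exact ⟨N, fun n hn => by
      rw [Real.dist_eq]
      exact hN n hn b (by simp)⟩
end
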